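/- Let β ∈ [-1,1] and let (σ_N^{(i)})_{i∈I} be a family of symmetric permutations of [N]² such that for all i ≠ i' ∈ I, lim_{N→∞} [#FP((σ_N^{(i')})⁻¹ ∘ σ_N^{(i)}) + #TP((σ_N^{(i')})⁻¹ ∘ σ_N^{(i)})]/N² = 0. Set M_N^{(i)} = W_N^{σ_N^{(i)}}. Then for every test graph T = (V,E,γ) in I that is a double tree, lim_{N→∞} ν⁰_N[T] = ∏ over twin-edge pairs {e,e'} of [1_{{e,e'} opposing and γ(e)=γ(e')} + β·1_{{e,e'} congruent and γ(e)=γ(e')}]. -/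

import Mathlib

open MeasureTheory Filter Finset

noncomputable section

namespace PermutedWigner

/-! ### Permutations of `[N]²` -/

/-- A permutation of `[N]²` is symmetric if it commutes with the transpose. -/
def SymmPerm {N : ℕ} (σ : Equiv.Perm (Fin N × Fin N)) : Prop :=
  ∀ p : Fin N × Fin N, σ (p.2, p.1) = ((σ p).2, (σ p).1)

/-- The set of fixed entries of a permutation of `[N]²`. -/
def FPset {N : ℕ} (σ : Equiv.Perm (Fin N × Fin N)) : Finset (Fin N × Fin N) :=
  univ.filter fun p => σ p = p

/-- The set of transposed entries of a permutation of `[N]²`. -/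
def TPset {N : ℕ} (σ : Equiv.Perm (Fin N × Fin N)) : Finset (Fin N × Fin N) :=
  univ.filter fun p => σ p = (p.2, p.1)

/-- The fixed entries in row `j`. -/
def FProw {N : ℕ} (σ : Equiv.Perm (Fin N × Fin N)) (j : Fin N) : Finset (Fin N) :=
  univ.filter fun k => σ (j, k) = (j, k)

/-- The transposed entries in row `j`. -/
def TProw {N : ℕ} (σ : Equiv.Perm (Fin N × Fin N)) (j : Fin N) : Finset (Fin N) :=
  univ.filter fun k => σ (j, k) = (k, j)

/-- The grid of an entry `(j,k)`: entries sharing a coordinate with `{j,k}`, except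
`(j,k)` and `(k,j)` themselves. -/
def GridPt {N : ℕ} (p : Fin N × Fin N) : Finset (Fin N × Fin N) :=
  (univ.filter fun q : Fin N × Fin N =>
      q.1 = p.1 ∨ q.1 = p.2 ∨ q.2 = p.1 ∨ q.2 = p.2) \ {p, (p.2, p.1)}

/-- The entries moved within their grid by `σ`. -/
def GridSet {N : ℕ} (σ : Equiv.Perm (Fin N × Fin N)) : Finset (Fin N × Fin N) :=
  univ.filter fun p => σ p ∈ GridPt p

/-- A sequence of permutations of `[N]²` stays off the grid if `#Grid(σ_N) = o(N²)`. -/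
def StaysOffGrid (σ : (N : ℕ) → Equiv.Perm (Fin N × Fin N)) : Prop :=
  Tendsto (fun N : ℕ => ((GridSet (σ N)).card : ℝ) / (N : ℝ) ^ 2) atTop (nhds 0)

/-- `lim_N max_{j∈[N]} f_N(j)/N = lim_N min_{j∈[N]} f_N(j)/N = a`, formulated as uniform
convergence of the row quantities `f_N(j)/N` to `a`. -/
def RowLimit (f : (N : ℕ) → Fin N → ℝ) (a : ℝ) : Prop :=
  ∀ ε > 0, ∀ᶠ N : ℕ in atTop, ∀ j : Fin N, |f N j / (N : ℝ) - a| < ε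

/-! ### Wigner matrices -/

/-- The data of a Wigner matrix ensemble with pseudovariance `β`: independent entries on and
above the diagonal, conjugate-symmetric entries, centered off-diagonal entries of unit variance
and pseudovariance `β`, real diagonal entries, and uniformly bounded moments of all orders. -/
structure WignerData (Ω : Type) [MeasureSpace Ω] (β : ℂ) where
  X : (N : ℕ) → Fin N × Fin N → Ω → ℂ
  m : ℕ → ℝ
  meas : ∀ N p, Measurable (X N p)
  indep : ∀ N : ℕ, ProbabilityTheory.iIndepFun
    (fun p : { p : Fin N × Fin N // p.1 ≤ p.2 } => X N p.val) volume
  conj_symm : ∀ (N : ℕ) (p : Fin N × Fin N) (ω : Ω),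
    X N (p.2, p.1) ω = (starRingEnd ℂ) (X N p ω)
  centered : ∀ (N : ℕ) (j k : Fin N), j < k → ∫ ω, X N (j, k) ω = 0
  variance : ∀ (N : ℕ) (j k : Fin N), j < k → ∫ ω, ‖X N (j, k) ω‖ ^ 2 = 1
  pseudovariance : ∀ (N : ℕ) (j k : Fin N), j < k → ∫ ω, (X N (j, k) ω) ^ 2 = β
  diag_real : ∀ (N : ℕ) (j : Fin N) (ω : Ω), (X N (j, j) ω).im = 0
  integrable_pow : ∀ (N : ℕ) (p : Fin N × Fin N) (ℓ : ℕ),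
    Integrable fun ω => ‖X N p ω‖ ^ ℓ
  moment_bound : ∀ (ℓ : ℕ) (N : ℕ) (p : Fin N × Fin N), (∫ ω, ‖X N p ω‖ ^ ℓ) ≤ m ℓ

variable {Ω : Type} [MeasureSpace Ω] {β : ℂ}

/-- The Wigner matrix `W_N(j,k) = X_N(j,k)/√N`. -/
def Wmat (D : WignerData Ω β) (N : ℕ) (ω : Ω) : Matrix (Fin N) (Fin N) ℂ :=
  fun j k => D.X N (j, k) ω / (Real.sqrt N : ℂ)

/-- The permuted Wigner matrix `W_N^σ(j,k) = W_N(σ(j,k))`. -/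
def WmatPerm (D : WignerData Ω β) (N : ℕ) (σ : Equiv.Perm (Fin N × Fin N)) (ω : Ω) :
    Matrix (Fin N) (Fin N) ℂ :=
  fun j k => Wmat D N ω (σ (j, k)).1 (σ (j, k)).2

/-! ### Test graphs and traffic distributions -/

/-- A test graph in `I`: a finite connected multidigraph with edges labeled by `I`. -/
structure TestGraph (I : Type) where
  V : Type
  E : Type
  fintypeV : Fintype V
  decEqV : DecidableEq V
  fintypeE : Fintype E
  nonemptyV : Nonempty V
  src : E → V
  tar : E → V
  lab : E → I
  connected : ∀ v w : V, Relation.ReflTransGen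
    (fun a b => ∃ e, (src e = a ∧ tar e = b) ∨ (src e = b ∧ tar e = a)) v w

attribute [instance] TestGraph.fintypeV TestGraph.decEqV TestGraph.fintypeE TestGraph.nonemptyV

variable {I : Type}

/-- The injective traffic distribution
`ν⁰_N[T] = (1/N) Σ_{φ : V ↪ [N]} E[∏_{e∈E} A^{γ(e)}(φ(tar e), φ(src e))]`. -/
def nu0 (T : TestGraph I) {N : ℕ} (A : I → Ω → Matrix (Fin N) (Fin N) ℂ) : ℂ :=
  (N : ℂ)⁻¹ * ∑ φ : T.V ↪ Fin N, ∫ ω, ∏ e : T.E, A (T.lab e) ω (φ (T.tar e)) (φ (T.src e))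

/-- Two edges have the same endpoints (as an unordered pair). -/
def SameEnds (T : TestGraph I) (e e' : T.E) : Prop :=
  (T.src e' = T.src e ∧ T.tar e' = T.tar e) ∨ (T.src e' = T.tar e ∧ T.tar e' = T.src e)

/-- The underlying undirected simple graph of a test graph. -/
def underlying (T : TestGraph I) : SimpleGraph T.V where
  Adj v w := v ≠ w ∧ ∃ e, (T.src e = v ∧ T.tar e = w) ∨ (T.src e = w ∧ T.tar e = v)
  symm := by
    constructor
    rintro v w ⟨hvw, e, h | h⟩
    · exact ⟨hvw.symm, e, Or.inr h⟩
    · exact ⟨hvw.symm, e, Or.inl h⟩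
  loopless := by constructor; rintro v ⟨h, -⟩; exact h rfl

open scoped Classical in
/-- A double tree: no loops, the underlying simple graph is a tree, and every pair of
adjacent vertices is joined by exactly two directed edges. -/
def IsDoubleTree (T : TestGraph I) : Prop :=
  (∀ e : T.E, T.src e ≠ T.tar e) ∧
  (∀ e : T.E, (univ.filter fun e' => SameEnds T e e').card = 2) ∧
  (underlying T).IsTree

/-- `t` pairs each edge with its twin. -/
def IsTwinInvolution (T : TestGraph I) (t : T.E → T.E) : Prop :=
  ∀ e, t e ≠ e ∧ t (t e) = e ∧ SameEnds T e (t e)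

/-- `S` selects exactly one edge from each twin pair of the pairing `t`. -/
def IsTwinSection (T : TestGraph I) (t : T.E → T.E) (S : Finset T.E) : Prop :=
  ∀ e, e ∈ S ↔ t e ∉ S

/-! ### Moments and noncrossing pairings -/

/-- `E[tr(A_1 ⋯ A_n)]`, the expected normalized trace of a word of random matrices. -/
def expTrWord {N n : ℕ} (A : Fin n → Ω → Matrix (Fin N) (Fin N) ℂ) : ℂ :=
  (N : ℂ)⁻¹ * ∫ ω, ((List.ofFn fun k => A k ω).prod).trace

open scoped Classical in
/-- `Σ_{π ∈ NC₂(n)} ∏_{{j,k} ∈ π} c(j,k)`: the sum over noncrossing pair partitions of `[n]`,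
encoded as fixed-point-free noncrossing involutions. -/
def ncSum (n : ℕ) (c : Fin n → Fin n → ℂ) : ℂ :=
  ∑ π : Equiv.Perm (Fin n),
    if (∀ j, π j ≠ j) ∧ (∀ j, π (π j) = j) ∧
        ¬∃ a b : Fin n, a < b ∧ b < π a ∧ π a < π b then
      ∏ j ∈ univ.filter fun j => j < π j, c j (π j)
    else 0

/-- The triple set in Popa's sufficient condition:
`{(j,k,l) : σ(j,k) ∈ {σ'(j,l), σ'(l,k)}}`. -/
def PopaSet {N : ℕ} (σ σ' : Equiv.Perm (Fin N × Fin N)) :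
    Finset (Fin N × Fin N × Fin N) :=
  univ.filter fun t =>
    σ (t.1, t.2.1) = σ' (t.1, t.2.2) ∨ σ (t.1, t.2.1) = σ' (t.2.2, t.2.1)

/-- A pair of sequences of random matrices converges in distribution to a semicircular family
of covariance `K`: all limiting mixed normalized-trace moments are given by sums over
noncrossing pair partitions of products of the corresponding covariance entries. -/
def ConvergesToSemicircular (M : (N : ℕ) → Fin 2 → Ω → Matrix (Fin N) (Fin N) ℂ)
    (K : Fin 2 → Fin 2 → ℝ) : Prop :=
  ∀ n : ℕ, 1 ≤ n → ∀ i : Fin n → Fin 2,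
    Tendsto (fun N : ℕ => expTrWord (fun k => M N (i k))) atTop
      (nhds (ncSum n fun j k => ((K (i j) (i k) : ℝ) : ℂ)))

/-- The permutation `ρ_N` fixing entries whose (1-based) max coordinate is odd and transposing
entries whose max coordinate is even. -/
def rho (N : ℕ) : Equiv.Perm (Fin N × Fin N) :=
  Function.Involutive.toPerm
    (fun p => if (max p.1.val p.2.val + 1) % 2 = 1 then p else (p.2, p.1))
    (by
      intro p
      dsimp only
      by_cases h : (max p.1.val p.2.val + 1) % 2 = 1
      · simp [h]
      · have h2 : ¬(max p.2.val p.1.val + 1) % 2 = 1 := by rw [max_comm]; exact h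
        simp [h, h2])

/-- The permutation `ζ_{N,n}` fixing entries with (1-based) `j + k ≡ 0 (mod n)` and transposing
all other entries. -/
def zeta (n N : ℕ) : Equiv.Perm (Fin N × Fin N) :=
  Function.Involutive.toPerm
    (fun p => if (p.1.val + p.2.val + 2) % n = 0 then p else (p.2, p.1))
    (by
      intro p
      dsimp only
      by_cases h : (p.1.val + p.2.val + 2) % n = 0
      · simp [h]
      · have h2 : ¬(p.2.val + p.1.val + 2) % n = 0 := by rw [Nat.add_comm p.2.val]; exact h
        simp [h, h2])

/-- The anti-diagonal transpose `(j,k) ↦ (N+1-k, N+1-j)` (1-based). -/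
def adt (N : ℕ) : Equiv.Perm (Fin N × Fin N) :=
  Function.Involutive.toPerm
    (fun p => (⟨N - 1 - p.2.val, by have := p.2.isLt; omega⟩,
               ⟨N - 1 - p.1.val, by have := p.1.isLt; omega⟩))
    (by
      intro p
      obtain ⟨⟨a, ha⟩, ⟨b, hb⟩⟩ := p
      simp only [Prod.ext_iff, Fin.ext_iff]
      omega)

/-- The defining equations (in 1-based coordinates) of the permutation `η_N` of Remark 3.4. -/
def EtaEquations (η : (N : ℕ) → Equiv.Perm (Fin N × Fin N)) : Prop :=
  ∀ N : ℕ,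
    (∀ (j k : Fin N) (_h1 : j.val + 1 < k.val) (_h2 : Even k.val),
      η N (j, k) = (k, ⟨j.val + 1, by have := k.isLt; omega⟩)) ∧
    (∀ (j k : Fin N) (_h1 : j.val + 1 = k.val) (_h2 : Even k.val),
      η N (j, k) = (k, ⟨0, by have := k.isLt; omega⟩)) ∧
    (∀ (j k : Fin N) (_h1 : 0 < j.val) (_h2 : j.val < k.val) (_h3 : Odd k.val),
      η N (j, k) = (k, ⟨j.val - 1, by have := k.isLt; omega⟩)) ∧
    (∀ (j k : Fin N) (_h1 : j.val = 0) (_h2 : j.val < k.val) (_h3 : Odd k.val),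
      η N (j, k) = (k, ⟨k.val - 1, by have := k.isLt; omega⟩)) ∧
    (∀ (j : Fin N) (_h : j.val + 1 < N),
      η N (j, j) = (⟨j.val + 1, by omega⟩, ⟨j.val + 1, by omega⟩)) ∧
    (∀ (j : Fin N) (_h : j.val + 1 = N),
      η N (j, j) = (⟨0, by have := j.isLt; omega⟩, ⟨0, by have := j.isLt; omega⟩)) ∧
    (∀ p : Fin N × Fin N, η N (p.2, p.1) = ((η N p).2, (η N p).1))

section AuxProb

open scoped Classical

variable {Ω : Type} [MeasureSpace Ω]

/-- Expectation of a product of two independent integrable complex random variables. -/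
lemma indep_integral_mul_c {X Y : Ω → ℂ}
    (h : ProbabilityTheory.IndepFun X Y volume) (hX : Integrable X volume)
    (hY : Integrable Y volume) :
    ∫ ω, X ω * Y ω = (∫ ω, X ω) * (∫ ω, Y ω) := by
  have hmulint : Integrable (X * Y) volume := h.integrable_mul hX hY
  have ha : Integrable (fun ω => (X ω).re) volume := Complex.reCLM.integrable_comp hX
  have hb : Integrable (fun ω => (X ω).im) volume := Complex.imCLM.integrable_comp hX
  have hc : Integrable (fun ω => (Y ω).re) volume := Complex.reCLM.integrable_comp hY
  have hd : Integrable (fun ω => (Y ω).im) volume := Complex.imCLM.integrable_comp hY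
  have iac : ProbabilityTheory.IndepFun (fun ω => (X ω).re) (fun ω => (Y ω).re) volume :=
    h.comp Complex.measurable_re Complex.measurable_re
  have ibd : ProbabilityTheory.IndepFun (fun ω => (X ω).im) (fun ω => (Y ω).im) volume :=
    h.comp Complex.measurable_im Complex.measurable_im
  have iad : ProbabilityTheory.IndepFun (fun ω => (X ω).re) (fun ω => (Y ω).im) volume :=
    h.comp Complex.measurable_re Complex.measurable_im
  have ibc : ProbabilityTheory.IndepFun (fun ω => (X ω).im) (fun ω => (Y ω).re) volume :=
    h.comp Complex.measurable_im Complex.measurable_re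
  have pac : Integrable (fun ω => (X ω).re * (Y ω).re) volume := iac.integrable_mul ha hc
  have pbd : Integrable (fun ω => (X ω).im * (Y ω).im) volume := ibd.integrable_mul hb hd
  have pad : Integrable (fun ω => (X ω).re * (Y ω).im) volume := iad.integrable_mul ha hd
  have pbc : Integrable (fun ω => (X ω).im * (Y ω).re) volume := ibc.integrable_mul hb hc
  have eXre : ∫ ω, (X ω).re = (∫ ω, X ω).re := by
    simpa using Complex.reCLM.integral_comp_comm hX
  have eXim : ∫ ω, (X ω).im = (∫ ω, X ω).im := by
    simpa using Complex.imCLM.integral_comp_comm hX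
  have eYre : ∫ ω, (Y ω).re = (∫ ω, Y ω).re := by
    simpa using Complex.reCLM.integral_comp_comm hY
  have eYim : ∫ ω, (Y ω).im = (∫ ω, Y ω).im := by
    simpa using Complex.imCLM.integral_comp_comm hY
  have eac : ∫ a, (X a).re * (Y a).re = (∫ a, (X a).re) * ∫ a, (Y a).re :=
    iac.integral_mul_eq_mul_integral ha.aestronglyMeasurable hc.aestronglyMeasurable
  have ebd : ∫ a, (X a).im * (Y a).im = (∫ a, (X a).im) * ∫ a, (Y a).im :=
    ibd.integral_mul_eq_mul_integral hb.aestronglyMeasurable hd.aestronglyMeasurable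
  have ead : ∫ a, (X a).re * (Y a).im = (∫ a, (X a).re) * ∫ a, (Y a).im :=
    iad.integral_mul_eq_mul_integral ha.aestronglyMeasurable hd.aestronglyMeasurable
  have ebc : ∫ a, (X a).im * (Y a).re = (∫ a, (X a).im) * ∫ a, (Y a).re :=
    ibc.integral_mul_eq_mul_integral hb.aestronglyMeasurable hc.aestronglyMeasurable
  have hre : (∫ ω, X ω * Y ω).re = ∫ ω, ((X ω).re * (Y ω).re - (X ω).im * (Y ω).im) := by
    have h1 := Complex.reCLM.integral_comp_comm hmulint
    simp only [Complex.reCLM_apply, Pi.mul_apply] at h1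
    rw [← h1]
    exact integral_congr_ae (Filter.Eventually.of_forall fun ω => by simp [Complex.mul_re])
  have him : (∫ ω, X ω * Y ω).im = ∫ ω, ((X ω).re * (Y ω).im + (X ω).im * (Y ω).re) := by
    have h1 := Complex.imCLM.integral_comp_comm hmulint
    simp only [Complex.imCLM_apply, Pi.mul_apply] at h1
    rw [← h1]
    exact integral_congr_ae (Filter.Eventually.of_forall fun ω => by simp [Complex.mul_im])
  apply Complex.ext
  · rw [hre, integral_sub pac pbd, eac, ebd, Complex.mul_re, ← eXre, ← eXim, ← eYre, ← eYim]
  · rw [him, integral_add pad pbc, ead, ebc, Complex.mul_im, ← eXre, ← eXim, ← eYre, ← eYim]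

/-- Expectation of a finite product of jointly independent integrable complex
random variables. -/
lemma integral_finset_prod_indep {κ : Type} [IsProbabilityMeasure (volume : Measure Ω)]
    {Y : κ → Ω → ℂ}
    (h : ProbabilityTheory.iIndepFun Y volume)
    (hmeas : ∀ k, Measurable (Y k)) (hint : ∀ k, Integrable (Y k) volume) (s : Finset κ) :
    Integrable (fun ω => ∏ k ∈ s, Y k ω) volume ∧
      ∫ ω, ∏ k ∈ s, Y k ω = ∏ k ∈ s, ∫ ω, Y k ω := by
  classical
  induction s using Finset.induction_on with
  | empty =>
    constructor
    · simp only [Finset.prod_empty]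
      exact integrable_const (1 : ℂ)
    · simp
  | @insert a s' ha ih =>
    have hPe : (fun ω => ∏ k ∈ s', Y k ω) = ∏ j ∈ s', Y j := by
      funext ω; rw [Finset.prod_apply]
    have hindep : ProbabilityTheory.IndepFun (fun ω => ∏ k ∈ s', Y k ω) (Y a) volume := by
      rw [hPe]; exact h.indepFun_finsetProd_of_notMem hmeas ha
    have hintP : Integrable (fun ω => Y a ω * ∏ k ∈ s', Y k ω) volume := by
      have := hindep.symm.integrable_mul (hint a) ih.1
      simpa [Pi.mul_def] using this
    constructor
    · have : (fun ω => ∏ k ∈ insert a s', Y k ω) = fun ω => Y a ω * ∏ k ∈ s', Y k ω := by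
        funext ω; rw [Finset.prod_insert ha]
      rw [this]; exact hintP
    · calc ∫ ω, ∏ k ∈ insert a s', Y k ω = ∫ ω, Y a ω * ∏ k ∈ s', Y k ω := by
            simp_rw [Finset.prod_insert ha]
        _ = (∫ ω, Y a ω) * ∫ ω, ∏ k ∈ s', Y k ω :=
            indep_integral_mul_c hindep.symm (hint a) ih.1
        _ = ∏ k ∈ insert a s', ∫ ω, Y k ω := by rw [ih.2, Finset.prod_insert ha]

end AuxProb
section Rep

open scoped Classical

variable {Ω : Type} [MeasureSpace Ω]

/-- Canonical representative of an entry up to transpose. -/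
def repr2 {N : ℕ} (p : Fin N × Fin N) : Fin N × Fin N := if p.1 ≤ p.2 then p else (p.2, p.1)

/-- The conjugation twist relating an entry to its canonical representative. -/
def gf {N : ℕ} (p : Fin N × Fin N) : ℂ → ℂ := if p.1 ≤ p.2 then id else (starRingEnd ℂ)

lemma repr2_le {N : ℕ} (p : Fin N × Fin N) : (repr2 p).1 ≤ (repr2 p).2 := by
  unfold repr2; split_ifs with h
  · exact h
  · exact le_of_not_ge h

lemma repr2_eq_self_or {N : ℕ} (p : Fin N × Fin N) : repr2 p = p ∨ repr2 p = (p.2, p.1) := by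
  unfold repr2; split_ifs
  · exact Or.inl rfl
  · exact Or.inr rfl

lemma repr2_swap {N : ℕ} (p : Fin N × Fin N) : repr2 (p.2, p.1) = repr2 p := by
  unfold repr2
  rcases le_or_gt p.1 p.2 with h | h
  · simp only [if_pos h]
    split_ifs with h2
    · have : p.1 = p.2 := le_antisymm h h2
      exact Prod.ext this.symm this
    · rfl
  · simp only [if_pos h.le, if_neg (not_le.mpr h)]

lemma repr2_cases {N : ℕ} {p q : Fin N × Fin N} (h : repr2 p = repr2 q) :
    q = p ∨ q = (p.2, p.1) := by
  rcases repr2_eq_self_or p with hp | hp <;> rcases repr2_eq_self_or q with hq | hq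
  · left; rw [← hq, ← h, hp]
  · right
    calc q = ((repr2 q).2, (repr2 q).1) := by rw [hq]
      _ = (p.2, p.1) := by rw [← h, hp]
  · right; rw [← hq, ← h, hp]
  · left
    calc q = ((repr2 q).2, (repr2 q).1) := by rw [hq]
      _ = p := by rw [← h, hp]

lemma measurable_gf {N : ℕ} (p : Fin N × Fin N) : Measurable (gf p) := by
  unfold gf; split_ifs
  · exact measurable_id
  · exact RCLike.continuous_conj.measurable

lemma norm_gf {N : ℕ} (p : Fin N × Fin N) (z : ℂ) : ‖gf p z‖ = ‖z‖ := by
  unfold gf; split_ifs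
  · rfl
  · exact RCLike.norm_conj z

lemma X_eq_gf {β : ℂ} (D : WignerData Ω β) (N : ℕ) (p : Fin N × Fin N) (ω : Ω) :
    D.X N p ω = gf p (D.X N (repr2 p) ω) := by
  unfold gf repr2; split_ifs with h
  · rfl
  · exact D.conj_symm N (p.2, p.1) ω

end Rep

section Factor

open scoped Classical

variable {Ω : Type} [MeasureSpace Ω] {I : Type}

/-- The entry of the permuted Wigner matrix read by edge `e` under the injection `φ`. -/
def posE (σ : I → (N : ℕ) → Equiv.Perm (Fin N × Fin N)) (T : TestGraph I) {N : ℕ}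
    (φ : T.V ↪ Fin N) (e : T.E) : Fin N × Fin N :=
  σ (T.lab e) N (φ (T.tar e), φ (T.src e))

/-- The independence class of an edge: the canonical representative of its entry. -/
def clE (σ : I → (N : ℕ) → Equiv.Perm (Fin N × Fin N)) (T : TestGraph I) {N : ℕ}
    (φ : T.V ↪ Fin N) (e : T.E) : {p : Fin N × Fin N // p.1 ≤ p.2} :=
  ⟨repr2 (posE σ T φ e), repr2_le _⟩

/-- The set of edges in a given independence class. -/
def fiberE (σ : I → (N : ℕ) → Equiv.Perm (Fin N × Fin N)) (T : TestGraph I) {N : ℕ}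
    (φ : T.V ↪ Fin N) (r : {p : Fin N × Fin N // p.1 ≤ p.2}) : Finset T.E :=
  Finset.univ.filter fun e => clE σ T φ e = r

/-- The function applied to the representative entry by the edges of a class. -/
def hFz (σ : I → (N : ℕ) → Equiv.Perm (Fin N × Fin N)) (T : TestGraph I) {N : ℕ}
    (φ : T.V ↪ Fin N) (r : {p : Fin N × Fin N // p.1 ≤ p.2}) : ℂ → ℂ :=
  fun z => ∏ e ∈ fiberE σ T φ r, gf (posE σ T φ e) z

lemma measurable_hFz (σ : I → (N : ℕ) → Equiv.Perm (Fin N × Fin N)) (T : TestGraph I) {N : ℕ}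
    (φ : T.V ↪ Fin N) (r : {p : Fin N × Fin N // p.1 ≤ p.2}) : Measurable (hFz σ T φ r) :=
  Finset.measurable_prod _ fun e _ => measurable_gf _

lemma norm_hFz (σ : I → (N : ℕ) → Equiv.Perm (Fin N × Fin N)) (T : TestGraph I) {N : ℕ}
    (φ : T.V ↪ Fin N) (r : {p : Fin N × Fin N // p.1 ≤ p.2}) (z : ℂ) :
    ‖hFz σ T φ r z‖ = ‖z‖ ^ (fiberE σ T φ r).card := by
  unfold hFz
  rw [norm_prod]
  rw [Finset.prod_congr rfl fun e _ => norm_gf (posE σ T φ e) z, Finset.prod_const]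

lemma prod_X_eq {β : ℂ} (D : WignerData Ω β)
    (σ : I → (N : ℕ) → Equiv.Perm (Fin N × Fin N)) (T : TestGraph I) {N : ℕ}
    (φ : T.V ↪ Fin N) (ω : Ω) :
    ∏ e : T.E, D.X N (posE σ T φ e) ω
      = ∏ r : {p : Fin N × Fin N // p.1 ≤ p.2}, hFz σ T φ r (D.X N r.val ω) := by
  have h1 : ∏ e : T.E, D.X N (posE σ T φ e) ω
      = ∏ e : T.E, gf (posE σ T φ e) (D.X N (repr2 (posE σ T φ e)) ω) :=
    Finset.prod_congr rfl fun e _ => X_eq_gf D N _ ω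
  rw [h1, ← Finset.prod_fiberwise_of_maps_to (g := clE σ T φ)
    (fun e _ => Finset.mem_univ _) (fun e => gf (posE σ T φ e) (D.X N (repr2 (posE σ T φ e)) ω))]
  refine Finset.prod_congr rfl fun r _ => ?_
  unfold hFz fiberE
  refine Finset.prod_congr rfl fun e he => ?_
  have : clE σ T φ e = r := (Finset.mem_filter.mp he).2
  have hval : repr2 (posE σ T φ e) = r.val := congrArg Subtype.val this
  rw [hval]

lemma integrable_Y {β : ℂ} (D : WignerData Ω β)
    (σ : I → (N : ℕ) → Equiv.Perm (Fin N × Fin N)) (T : TestGraph I) {N : ℕ}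
    (φ : T.V ↪ Fin N) (r : {p : Fin N × Fin N // p.1 ≤ p.2}) :
    Integrable (fun ω => hFz σ T φ r (D.X N r.val ω)) volume := by
  refine (D.integrable_pow N r.val (fiberE σ T φ r).card).mono'
    ((measurable_hFz σ T φ r).comp (D.meas N r.val)).aestronglyMeasurable
    (Filter.Eventually.of_forall fun ω => le_of_eq (norm_hFz σ T φ r _))

lemma FF_prod {β : ℂ} [IsProbabilityMeasure (volume : Measure Ω)] (D : WignerData Ω β)
    (σ : I → (N : ℕ) → Equiv.Perm (Fin N × Fin N)) (T : TestGraph I) {N : ℕ}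
    (φ : T.V ↪ Fin N) :
    ∫ ω, ∏ e : T.E, D.X N (posE σ T φ e) ω
      = ∏ r : {p : Fin N × Fin N // p.1 ≤ p.2}, ∫ ω, hFz σ T φ r (D.X N r.val ω) := by
  have hind : ProbabilityTheory.iIndepFun
      (fun r : {p : Fin N × Fin N // p.1 ≤ p.2} => fun ω => hFz σ T φ r (D.X N r.val ω))
      volume := by
    have := (D.indep N).comp (fun r => hFz σ T φ r) (fun r => measurable_hFz σ T φ r)
    exact this
  have key := integral_finset_prod_indep hind
    (fun r => (measurable_hFz σ T φ r).comp (D.meas N r.val))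
    (fun r => integrable_Y D σ T φ r) Finset.univ
  rw [← key.2]
  refine integral_congr_ae (Filter.Eventually.of_forall fun ω => ?_)
  exact prod_X_eq D σ T φ ω

end Factor
section Bound

open scoped Classical

variable {Ω : Type} [MeasureSpace Ω] {I : Type}

/-- A uniform bound for the expected products. -/
def Cb {β : ℂ} (D : WignerData Ω β) (T : TestGraph I) : ℝ :=
  (1 + ∑ ℓ ∈ Finset.range (Fintype.card T.E + 1), |D.m ℓ|) ^ Fintype.card T.E

lemma FF_norm_le {β : ℂ} [IsProbabilityMeasure (volume : Measure Ω)] (D : WignerData Ω β)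
    (σ : I → (N : ℕ) → Equiv.Perm (Fin N × Fin N)) (T : TestGraph I) {N : ℕ}
    (φ : T.V ↪ Fin N) :
    ‖∫ ω, ∏ e : T.E, D.X N (posE σ T φ e) ω‖ ≤ Cb D T := by
  rw [FF_prod D σ T φ, norm_prod]
  set M : ℝ := 1 + ∑ ℓ ∈ Finset.range (Fintype.card T.E + 1), |D.m ℓ| with hM
  have hM1 : 1 ≤ M := by
    have : (0:ℝ) ≤ ∑ ℓ ∈ Finset.range (Fintype.card T.E + 1), |D.m ℓ| :=
      Finset.sum_nonneg fun ℓ _ => abs_nonneg _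
    simp only [hM]; linarith
  have hstep : ∀ r : {p : Fin N × Fin N // p.1 ≤ p.2},
      ‖∫ ω, hFz σ T φ r (D.X N r.val ω)‖
        ≤ if r ∈ Finset.univ.image (clE σ T φ) then M else 1 := by
    intro r
    split_ifs with hr
    · calc ‖∫ ω, hFz σ T φ r (D.X N r.val ω)‖
          ≤ ∫ ω, ‖hFz σ T φ r (D.X N r.val ω)‖ := norm_integral_le_integral_norm _
        _ = ∫ ω, ‖D.X N r.val ω‖ ^ (fiberE σ T φ r).card :=
            integral_congr_ae (Filter.Eventually.of_forall fun ω => norm_hFz σ T φ r _)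
        _ ≤ D.m (fiberE σ T φ r).card := D.moment_bound _ N r.val
        _ ≤ |D.m (fiberE σ T φ r).card| := le_abs_self _
        _ ≤ ∑ ℓ ∈ Finset.range (Fintype.card T.E + 1), |D.m ℓ| := by
            refine Finset.single_le_sum (fun ℓ _ => abs_nonneg (D.m ℓ)) ?_
            rw [Finset.mem_range]
            have : (fiberE σ T φ r).card ≤ Fintype.card T.E := by
              unfold fiberE
              exact le_trans (Finset.card_filter_le _ _) (le_of_eq (Finset.card_univ))
            omega
        _ ≤ M := by simp only [hM]; linarith
    · have hempty : fiberE σ T φ r = ∅ := by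
        unfold fiberE
        rw [Finset.filter_eq_empty_iff]
        intro e _
        intro hcl
        exact hr (Finset.mem_image.mpr ⟨e, Finset.mem_univ e, hcl⟩)
      have : ∀ ω : Ω, hFz σ T φ r (D.X N r.val ω) = 1 := by
        intro ω; unfold hFz; rw [hempty, Finset.prod_empty]
      rw [integral_congr_ae (Filter.Eventually.of_forall this)]
      simp
  calc ∏ r : {p : Fin N × Fin N // p.1 ≤ p.2}, ‖∫ ω, hFz σ T φ r (D.X N r.val ω)‖
      ≤ ∏ r : {p : Fin N × Fin N // p.1 ≤ p.2},
          (if r ∈ Finset.univ.image (clE σ T φ) then M else 1) :=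
        Finset.prod_le_prod (fun r _ => norm_nonneg _) (fun r _ => hstep r)
    _ = M ^ (Finset.univ.image (clE σ T φ)).card := by
        rw [Finset.prod_ite_mem, Finset.univ_inter, Finset.prod_const]
    _ ≤ M ^ Fintype.card T.E := by
        refine pow_le_pow_right₀ hM1 ?_
        exact le_trans (Finset.card_image_le) (le_of_eq Finset.card_univ)
    _ = Cb D T := rfl

end Bound
section Eval

open scoped Classical

variable {Ω : Type} [MeasureSpace Ω] {I : Type}

lemma integral_single {β : ℂ} (D : WignerData Ω β) {N : ℕ} (p : Fin N × Fin N)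
    (hp : p.1 ≠ p.2) : ∫ ω, gf p (D.X N (repr2 p) ω) = 0 := by
  unfold gf repr2
  split_ifs with h
  · have hlt : p.1 < p.2 := lt_of_le_of_ne h hp
    simpa using D.centered N p.1 p.2 hlt
  · have hlt : p.2 < p.1 := lt_of_not_ge h
    have : ∫ ω, (starRingEnd ℂ) (D.X N (p.2, p.1) ω) = (starRingEnd ℂ) (∫ ω, D.X N (p.2, p.1) ω) :=
      integral_conj
    rw [this, D.centered N p.2 p.1 hlt, map_zero]

lemma integral_pair_opp {β : ℂ} (D : WignerData Ω β) {N : ℕ} (p : Fin N × Fin N)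
    (hp : p.1 ≠ p.2) :
    ∫ ω, gf p (D.X N (repr2 p) ω) * gf (p.2, p.1) (D.X N (repr2 p) ω) = 1 := by
  have hpt : ∀ z : ℂ, z * (starRingEnd ℂ) z = ((‖z‖ ^ 2 : ℝ) : ℂ) := by
    intro z
    rw [Complex.mul_conj, Complex.normSq_eq_norm_sq]
  rcases lt_or_gt_of_ne hp with hlt | hlt
  · have h1 : p.1 ≤ p.2 := hlt.le
    have h2 : ¬(p.2 ≤ p.1) := not_le.mpr hlt
    unfold gf repr2
    rw [if_pos h1, if_pos h1]
    simp only [if_neg h2, id_eq]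
    have : ∀ ω : Ω, D.X N p ω * (starRingEnd ℂ) (D.X N p ω) = ((‖D.X N p ω‖ ^ 2 : ℝ) : ℂ) :=
      fun ω => hpt _
    rw [integral_congr_ae (Filter.Eventually.of_forall this)]
    have hco : ∫ ω, ((‖D.X N p ω‖ ^ 2 : ℝ) : ℂ) = ((∫ ω, ‖D.X N p ω‖ ^ 2 : ℝ) : ℂ) :=
      integral_ofReal
    rw [hco, D.variance N p.1 p.2 hlt, Complex.ofReal_one]
  · have h1 : ¬(p.1 ≤ p.2) := not_le.mpr hlt
    have h2 : p.2 ≤ p.1 := hlt.le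
    unfold gf repr2
    rw [if_neg h1, if_neg h1]
    simp only [if_pos h2, id_eq]
    have : ∀ ω : Ω, (starRingEnd ℂ) (D.X N (p.2, p.1) ω) * D.X N (p.2, p.1) ω
        = ((‖D.X N (p.2, p.1) ω‖ ^ 2 : ℝ) : ℂ) := fun ω => by rw [mul_comm]; exact hpt _
    rw [integral_congr_ae (Filter.Eventually.of_forall this)]
    have hco : ∫ ω, ((‖D.X N (p.2, p.1) ω‖ ^ 2 : ℝ) : ℂ)
        = ((∫ ω, ‖D.X N (p.2, p.1) ω‖ ^ 2 : ℝ) : ℂ) := integral_ofReal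
    rw [hco, D.variance N p.2 p.1 hlt, Complex.ofReal_one]

lemma integral_pair_cong {β : ℝ} (D : WignerData Ω (β : ℂ)) {N : ℕ} (p : Fin N × Fin N)
    (hp : p.1 ≠ p.2) :
    ∫ ω, gf p (D.X N (repr2 p) ω) * gf p (D.X N (repr2 p) ω) = (β : ℂ) := by
  rcases lt_or_gt_of_ne hp with hlt | hlt
  · have h1 : p.1 ≤ p.2 := hlt.le
    unfold gf repr2
    rw [if_pos h1, if_pos h1]
    simp only [id_eq]
    have : ∀ ω : Ω, D.X N p ω * D.X N p ω = (D.X N p ω) ^ 2 := fun ω => (sq _).symm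
    rw [integral_congr_ae (Filter.Eventually.of_forall this)]
    simpa using D.pseudovariance N p.1 p.2 hlt
  · have h1 : ¬(p.1 ≤ p.2) := not_le.mpr hlt
    unfold gf repr2
    rw [if_neg h1, if_neg h1]
    have : ∀ ω : Ω, (starRingEnd ℂ) (D.X N (p.2, p.1) ω) * (starRingEnd ℂ) (D.X N (p.2, p.1) ω)
        = (starRingEnd ℂ) ((D.X N (p.2, p.1) ω) ^ 2) := fun ω => by
      rw [← map_mul, sq]
    rw [integral_congr_ae (Filter.Eventually.of_forall this), integral_conj,
      D.pseudovariance N p.2 p.1 hlt, Complex.conj_ofReal]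

lemma fiberE_empty_of_not_mem {σ : I → (N : ℕ) → Equiv.Perm (Fin N × Fin N)} {T : TestGraph I}
    {N : ℕ} {φ : T.V ↪ Fin N} {r : {p : Fin N × Fin N // p.1 ≤ p.2}}
    (hr : r ∉ Finset.univ.image (clE σ T φ)) : fiberE σ T φ r = ∅ := by
  unfold fiberE
  rw [Finset.filter_eq_empty_iff]
  intro e _ hcl
  exact hr (Finset.mem_image.mpr ⟨e, Finset.mem_univ e, hcl⟩)

lemma FF_of_good {β : ℝ} [IsProbabilityMeasure (volume : Measure Ω)] (D : WignerData Ω (β : ℂ))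
    (σ : I → (N : ℕ) → Equiv.Perm (Fin N × Fin N)) (hsymm : ∀ i N, SymmPerm (σ i N))
    (T : TestGraph I) (hT : IsDoubleTree T) (t : T.E → T.E) (S : Finset T.E)
    (htw : IsTwinInvolution T t) (hsec : IsTwinSection T t S) {N : ℕ}
    (φ : T.V ↪ Fin N)
    (hG1 : ∀ e, (posE σ T φ e).1 ≠ (posE σ T φ e).2)
    (hG2 : ∀ e f, clE σ T φ e = clE σ T φ f → f = e ∨ (f = t e ∧ T.lab f = T.lab e)) :
    ∫ ω, ∏ e : T.E, D.X N (posE σ T φ e) ω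
      = ∏ e ∈ S,
          ((if (T.src (t e) = T.tar e ∧ T.tar (t e) = T.src e) ∧ T.lab (t e) = T.lab e then
              (1 : ℂ)
            else 0) +
           (β : ℂ) *
            (if (T.src (t e) = T.src e ∧ T.tar (t e) = T.tar e) ∧ T.lab (t e) = T.lab e then
              (1 : ℂ)
            else 0)) := by
  rw [FF_prod D σ T φ]
  by_cases hall : ∀ e : T.E, T.lab (t e) = T.lab e
  · -- all twin pairs carry equal labels
    have hcl_twin : ∀ e : T.E, clE σ T φ (t e) = clE σ T φ e := by
      intro e
      rcases (htw e).2.2 with hc | ho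
      · have hpe : posE σ T φ (t e) = posE σ T φ e := by
          unfold posE; rw [hc.1, hc.2, hall e]
        apply Subtype.ext
        show repr2 (posE σ T φ (t e)) = repr2 (posE σ T φ e)
        rw [hpe]
      · have hpe : posE σ T φ (t e) = ((posE σ T φ e).2, (posE σ T φ e).1) := by
          unfold posE; rw [ho.1, ho.2, hall e]
          exact hsymm (T.lab e) N (φ (T.tar e), φ (T.src e))
        apply Subtype.ext
        show repr2 (posE σ T φ (t e)) = repr2 (posE σ T φ e)
        rw [hpe, repr2_swap]
    have hfiber : ∀ e : T.E, fiberE σ T φ (clE σ T φ e) = {e, t e} := by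
      intro e
      ext f
      simp only [fiberE, Finset.mem_filter, Finset.mem_univ, true_and, Finset.mem_insert,
        Finset.mem_singleton]
      constructor
      · intro hf
        rcases hG2 e f hf.symm with h | h
        · exact Or.inl h
        · exact Or.inr h.1
      · rintro (rfl | rfl)
        · rfl
        · exact hcl_twin e
    have houtside : ∀ r ∈ (Finset.univ : Finset {p : Fin N × Fin N // p.1 ≤ p.2}),
        r ∉ Finset.univ.image (clE σ T φ) → (∫ ω, hFz σ T φ r (D.X N r.val ω)) = 1 := by
      intro r _ hr
      have hempty := fiberE_empty_of_not_mem hr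
      have hone : ∀ ω : Ω, hFz σ T φ r (D.X N r.val ω) = 1 := by
        intro ω; unfold hFz; rw [hempty, Finset.prod_empty]
      rw [integral_congr_ae (Filter.Eventually.of_forall hone)]
      simp
    rw [← Finset.prod_subset (Finset.subset_univ (Finset.univ.image (clE σ T φ))) houtside]
    have himg : Finset.univ.image (clE σ T φ) = S.image (clE σ T φ) := by
      apply Finset.Subset.antisymm
      · intro r hr
        obtain ⟨e, _, rfl⟩ := Finset.mem_image.mp hr
        by_cases he : e ∈ S
        · exact Finset.mem_image.mpr ⟨e, he, rfl⟩
        · have hte : t e ∈ S := by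
            by_contra hte
            exact he ((hsec e).mpr hte)
          exact Finset.mem_image.mpr ⟨t e, hte, hcl_twin e⟩
      · exact Finset.image_subset_image (Finset.subset_univ S)
    rw [himg]
    rw [Finset.prod_image (fun e he f hf hef => by
      rcases hG2 e f hef with h | h
      · exact h.symm
      · exfalso
        have : t e ∉ S := (hsec e).mp he
        rw [← h.1] at this
        exact this hf)]
    refine Finset.prod_congr rfl fun e he => ?_
    have hne : e ≠ t e := Ne.symm (htw e).1
    have hprodz : ∀ z : ℂ, hFz σ T φ (clE σ T φ e) z
        = gf (posE σ T φ e) z * gf (posE σ T φ (t e)) z := by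
      intro z; unfold hFz; rw [hfiber e, Finset.prod_pair hne]
    rcases (htw e).2.2 with hc | ho
    · -- congruent twins
      have hpe : posE σ T φ (t e) = posE σ T φ e := by
        unfold posE; rw [hc.1, hc.2, hall e]
      have heval : ∫ ω, hFz σ T φ (clE σ T φ e) (D.X N (clE σ T φ e).val ω) = (β : ℂ) := by
        have hpt : ∀ ω : Ω, hFz σ T φ (clE σ T φ e) (D.X N (clE σ T φ e).val ω)
            = gf (posE σ T φ e) (D.X N (repr2 (posE σ T φ e)) ω)
              * gf (posE σ T φ e) (D.X N (repr2 (posE σ T φ e)) ω) := by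
          intro ω
          rw [hprodz, hpe]
          rfl
        rw [integral_congr_ae (Filter.Eventually.of_forall hpt)]
        exact integral_pair_cong D _ (hG1 e)
      have hif1 : ¬((T.src (t e) = T.tar e ∧ T.tar (t e) = T.src e) ∧ T.lab (t e) = T.lab e) := by
        rintro ⟨⟨h1, _⟩, _⟩
        exact hT.1 e (hc.1.symm.trans h1)
      rw [heval, if_neg hif1, if_pos ⟨hc, hall e⟩]
      ring
    · -- opposing twins
      have hpe : posE σ T φ (t e) = ((posE σ T φ e).2, (posE σ T φ e).1) := by
        unfold posE; rw [ho.1, ho.2, hall e]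
        exact hsymm (T.lab e) N (φ (T.tar e), φ (T.src e))
      have heval : ∫ ω, hFz σ T φ (clE σ T φ e) (D.X N (clE σ T φ e).val ω) = 1 := by
        have hpt : ∀ ω : Ω, hFz σ T φ (clE σ T φ e) (D.X N (clE σ T φ e).val ω)
            = gf (posE σ T φ e) (D.X N (repr2 (posE σ T φ e)) ω)
              * gf ((posE σ T φ e).2, (posE σ T φ e).1) (D.X N (repr2 (posE σ T φ e)) ω) := by
          intro ω
          rw [hprodz, hpe]
          rfl
        rw [integral_congr_ae (Filter.Eventually.of_forall hpt)]
        exact integral_pair_opp D _ (hG1 e)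
      have hif2 : ¬((T.src (t e) = T.src e ∧ T.tar (t e) = T.tar e) ∧ T.lab (t e) = T.lab e) := by
        rintro ⟨⟨h1, _⟩, _⟩
        exact hT.1 e (h1.symm.trans ho.1)
      rw [heval, if_pos ⟨ho, hall e⟩, if_neg hif2]
      ring
  · -- some twin pair has distinct labels
    obtain ⟨e0, he0⟩ := not_forall.mp hall
    obtain ⟨e1, he1lab, he1S⟩ : ∃ e1, T.lab (t e1) ≠ T.lab e1 ∧ e1 ∈ S := by
      by_cases h : e0 ∈ S
      · exact ⟨e0, he0, h⟩
      · refine ⟨t e0, ?_, by by_contra hte; exact h ((hsec e0).mpr hte)⟩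
        rw [(htw e0).2.1]
        exact fun hh => he0 hh.symm
    have hrhs : ∏ e ∈ S,
        ((if (T.src (t e) = T.tar e ∧ T.tar (t e) = T.src e) ∧ T.lab (t e) = T.lab e then
            (1 : ℂ) else 0) +
         (β : ℂ) *
          (if (T.src (t e) = T.src e ∧ T.tar (t e) = T.tar e) ∧ T.lab (t e) = T.lab e then
            (1 : ℂ) else 0)) = 0 := by
      apply Finset.prod_eq_zero he1S
      rw [if_neg (fun h => he1lab h.2), if_neg (fun h => he1lab h.2)]
      ring
    rw [hrhs]
    apply Finset.prod_eq_zero (Finset.mem_univ (clE σ T φ e1))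
    have hfib : fiberE σ T φ (clE σ T φ e1) = {e1} := by
      ext f
      simp only [fiberE, Finset.mem_filter, Finset.mem_univ, true_and, Finset.mem_singleton]
      constructor
      · intro hf
        rcases hG2 e1 f hf.symm with h | h
        · exact h
        · exfalso
          apply he1lab
          rw [← h.1]
          exact h.2
      · rintro rfl; rfl
    have hone : ∀ ω : Ω, hFz σ T φ (clE σ T φ e1) (D.X N (clE σ T φ e1).val ω)
        = gf (posE σ T φ e1) (D.X N (repr2 (posE σ T φ e1)) ω) := by
      intro ω; unfold hFz; rw [hfib, Finset.prod_singleton]; rfl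
    rw [integral_congr_ae (Filter.Eventually.of_forall hone)]
    exact integral_single D _ (hG1 e1)

end Eval
section Counting

open scoped Classical

/-- Master counting lemma: if every fiber of the restriction map to `W`
has at most `k` elements, then there are at most `k * N ^ #W` embeddings. -/
lemma count_master {V : Type} [Fintype V] [DecidableEq V] {N : ℕ}
    (s : Finset (V ↪ Fin N)) (W : Finset V) (k : ℕ)
    (h : ∀ ψ ∈ s, (s.filter fun φ => ∀ x ∈ W, φ x = ψ x).card ≤ k) :
    s.card ≤ k * N ^ W.card := by
  have hmain := Finset.card_le_mul_card_image
    (f := fun (φ : V ↪ Fin N) => fun x : {x // x ∈ W} => φ x.val) s k ?_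
  · refine le_trans hmain (Nat.mul_le_mul_left k ?_)
    calc (Finset.image (fun (φ : V ↪ Fin N) => fun x : {x // x ∈ W} => φ x.val) s).card
        ≤ Fintype.card ({x // x ∈ W} → Fin N) := Finset.card_le_univ _
      _ = N ^ W.card := by rw [Fintype.card_fun, Fintype.card_fin, Fintype.card_coe]
  · intro a ha
    obtain ⟨ψ, hψ, rfl⟩ := Finset.mem_image.mp ha
    refine le_trans (Finset.card_le_card ?_) (h ψ hψ)
    intro φ hφ
    rw [Finset.mem_filter] at hφ ⊢
    refine ⟨hφ.1, fun x hx => ?_⟩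
    exact congrFun hφ.2 ⟨x, hx⟩

/-- Counting embeddings subject to a pair constraint at two fixed distinct vertices. -/
lemma count_pair {V : Type} [Fintype V] [DecidableEq V] {N : ℕ}
    (u v : V) (huv : u ≠ v) (B : Finset (Fin N × Fin N)) :
    ((Finset.univ : Finset (V ↪ Fin N)).filter fun φ => (φ u, φ v) ∈ B).card
      ≤ B.card * N ^ (Fintype.card V - 2) := by
  set W : Finset V := Finset.univ \ {u, v} with hW
  have hWcard : W.card = Fintype.card V - 2 := by
    rw [hW, Finset.card_sdiff_of_subset (Finset.subset_univ _), Finset.card_univ]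
    congr 1
    rw [Finset.card_insert_of_notMem (by simpa using huv), Finset.card_singleton]
  have := count_master ((Finset.univ : Finset (V ↪ Fin N)).filter fun φ => (φ u, φ v) ∈ B) W
    B.card ?_
  · rwa [hWcard] at this
  · intro ψ hψ
    refine Finset.card_le_card_of_injOn (fun φ => (φ u, φ v)) ?_ ?_
    · intro φ hφ
      rw [Finset.mem_coe, Finset.mem_filter] at hφ
      exact (Finset.mem_filter.mp hφ.1).2
    · intro φ hφ φ' hφ' heq
      rw [Finset.coe_filter] at hφ hφ'
      obtain ⟨-, hagf⟩ := hφ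
      obtain ⟨-, hagf'⟩ := hφ'
      refine DFunLike.ext φ φ' fun x => ?_
      by_cases hx : x = u
      · subst hx; exact congrArg Prod.fst heq
      by_cases hx' : x = v
      · subst hx'; exact congrArg Prod.snd heq
      · have hxW : x ∈ W := by
          rw [hW]
          simp [hx, hx']
        rw [hagf x hxW, hagf' x hxW]

/-- Counting embeddings whose value at one vertex is (quasi-)determined
by the values elsewhere. -/
lemma count_dep {V : Type} [Fintype V] [DecidableEq V] {N : ℕ}
    (w : V) (k : ℕ) (K : (V ↪ Fin N) → Finset (Fin N))
    (hk : ∀ φ, (K φ).card ≤ k)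
    (hdep : ∀ φ ψ : V ↪ Fin N, (∀ x, x ≠ w → φ x = ψ x) → K φ = K ψ) :
    ((Finset.univ : Finset (V ↪ Fin N)).filter fun φ => φ w ∈ K φ).card
      ≤ k * N ^ (Fintype.card V - 1) := by
  set W : Finset V := Finset.univ \ {w} with hW
  have hWcard : W.card = Fintype.card V - 1 := by
    rw [hW, Finset.card_sdiff_of_subset (Finset.subset_univ _), Finset.card_univ, Finset.card_singleton]
  have := count_master ((Finset.univ : Finset (V ↪ Fin N)).filter fun φ => φ w ∈ K φ) W k ?_
  · rwa [hWcard] at this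
  · intro ψ hψ
    refine le_trans (Finset.card_le_card_of_injOn (fun φ => φ w) ?_ ?_) (hk ψ)
    · intro φ hφ
      rw [Finset.mem_coe, Finset.mem_filter] at hφ
      obtain ⟨hφ1, hagf⟩ := hφ
      have hmem := (Finset.mem_filter.mp hφ1).2
      have : K φ = K ψ := by
        refine hdep φ ψ fun x hx => hagf x ?_
        rw [hW]; simp [hx]
      rwa [this] at hmem
    · intro φ hφ φ' hφ' heq
      rw [Finset.coe_filter] at hφ hφ'
      obtain ⟨-, hagf⟩ := hφ
      obtain ⟨-, hagf'⟩ := hφ'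
      refine DFunLike.ext φ φ' fun x => ?_
      by_cases hx : x = w
      · subst hx; exact heq
      · have hxW : x ∈ W := by rw [hW]; simp [hx]
        rw [hagf x hxW, hagf' x hxW]

/-- `N! / (N-n)! / N^n → 1`. -/
lemma tendsto_descFactorial_div (n : ℕ) :
    Filter.Tendsto (fun N : ℕ => (N.descFactorial n : ℝ) / (N : ℝ) ^ n)
      Filter.atTop (nhds 1) := by
  have hlim : Filter.Tendsto (fun N : ℕ => ∏ i ∈ Finset.range n, (((N - i : ℕ) : ℝ) / (N : ℝ)))
      Filter.atTop (nhds (∏ _i ∈ Finset.range n, (1 : ℝ))) := by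
    refine tendsto_finset_prod _ fun i _ => ?_
    have h1 : Filter.Tendsto (fun N : ℕ => 1 - (i : ℝ) / (N : ℝ)) Filter.atTop (nhds 1) := by
      have := (tendsto_const_div_atTop_nhds_zero_nat (i : ℝ))
      have h2 := (tendsto_const_nhds :
        Filter.Tendsto (fun _ : ℕ => (1:ℝ)) Filter.atTop (nhds 1)).sub this
      simpa using h2
    refine h1.congr' ?_
    filter_upwards [Filter.eventually_ge_atTop (max i 1)] with N hN
    have hiN : i ≤ N := le_trans (le_max_left _ _) hN
    have hN1 : (1:ℝ) ≤ (N:ℝ) := by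
      have : (1:ℕ) ≤ N := le_trans (le_max_right _ _) hN
      exact_mod_cast this
    have hNne : (N:ℝ) ≠ 0 := by linarith
    rw [Nat.cast_sub hiN]
    field_simp
  have : (∏ _i ∈ Finset.range n, (1 : ℝ)) = 1 := Finset.prod_const_one
  rw [this] at hlim
  refine hlim.congr' ?_
  filter_upwards [Filter.eventually_ge_atTop 1] with N hN
  have hNne : ((N:ℝ)) ≠ 0 := by positivity
  rw [Nat.descFactorial_eq_prod_range]
  push_cast
  rw [Finset.prod_div_distrib, Finset.prod_const, Finset.card_range]

end Counting
section Structure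

open scoped Classical

variable {I : Type}

lemma sameEnds_refl (T : TestGraph I) (e : T.E) : SameEnds T e e := Or.inl ⟨rfl, rfl⟩

/-- In a double tree with twin involution `t`, the edges sharing endpoints with `e`
are exactly `e` and its twin. -/
lemma filter_sameEnds (T : TestGraph I) (hT : IsDoubleTree T) (t : T.E → T.E)
    (htw : IsTwinInvolution T t) (e : T.E) :
    Finset.univ.filter (fun f => SameEnds T e f) = {e, t e} := by
  symm
  apply Finset.eq_of_subset_of_card_le
  · intro f hf
    rw [Finset.mem_insert, Finset.mem_singleton] at hf
    rcases hf with rfl | rfl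
    · exact Finset.mem_filter.mpr ⟨Finset.mem_univ _, sameEnds_refl T f⟩
    · exact Finset.mem_filter.mpr ⟨Finset.mem_univ _, (htw e).2.2⟩
  · have h2 := hT.2.1 e
    have hcard : ({e, t e} : Finset T.E).card = 2 := by
      rw [Finset.card_insert_of_notMem (by simpa using (Ne.symm (htw e).1)),
        Finset.card_singleton]
    rw [hcard]
    calc (Finset.univ.filter fun f => SameEnds T e f).card
        = (Finset.univ.filter fun f => SameEnds T e f).card := rfl
      _ ≤ 2 := le_of_eq (hT.2.1 e)

/-- Edge counting in a double tree: `#S = #V - 1` and `#E = 2 #S`. -/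
lemma card_S_eq (T : TestGraph I) (hT : IsDoubleTree T) (t : T.E → T.E) (S : Finset T.E)
    (htw : IsTwinInvolution T t) (hsec : IsTwinSection T t S) :
    S.card + 1 = Fintype.card T.V ∧ Fintype.card T.E = 2 * S.card := by
  have htinj : Function.Injective t :=
    Function.Involutive.injective (fun e => (htw e).2.1)
  constructor
  · -- S is in bijection with the edges of the underlying tree
    have hbij : S.card = (underlying T).edgeFinset.card := by
      apply Finset.card_bij (fun e _ => s(T.src e, T.tar e))
      · intro e he
        rw [SimpleGraph.mem_edgeFinset]
        exact ⟨hT.1 e, e, Or.inl ⟨rfl, rfl⟩⟩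
      · intro e he f hf heq
        rw [Sym2.eq_iff] at heq
        have hse : SameEnds T e f := by
          rcases heq with ⟨h1, h2⟩ | ⟨h1, h2⟩
          · exact Or.inl ⟨h1.symm, h2.symm⟩
          · exact Or.inr ⟨h2.symm, h1.symm⟩
        have hmem : f ∈ ({e, t e} : Finset T.E) := by
          rw [← filter_sameEnds T hT t htw e]
          exact Finset.mem_filter.mpr ⟨Finset.mem_univ _, hse⟩
        rw [Finset.mem_insert, Finset.mem_singleton] at hmem
        rcases hmem with rfl | rfl
        · rfl
        · exact absurd hf ((hsec e).mp he)
      · intro ed hed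
        induction ed with
        | _ v w =>
          rw [SimpleGraph.mem_edgeFinset] at hed
          obtain ⟨hne, f, hf⟩ := hed
          by_cases hfS : f ∈ S
          · refine ⟨f, hfS, ?_⟩
            rcases hf with ⟨h1, h2⟩ | ⟨h1, h2⟩
            · rw [h1, h2]
            · rw [h1, h2]; exact Sym2.eq_swap
          · have htf : t f ∈ S := by
              by_contra htf
              exact hfS ((hsec f).mpr htf)
            refine ⟨t f, htf, ?_⟩
            have hse := (htw f).2.2
            have : s(T.src (t f), T.tar (t f)) = s(T.src f, T.tar f) := by
              rcases hse with ⟨h1, h2⟩ | ⟨h1, h2⟩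
              · rw [h1, h2]
              · rw [h1, h2]; exact Sym2.eq_swap
            rw [this]
            rcases hf with ⟨h1, h2⟩ | ⟨h1, h2⟩
            · rw [h1, h2]
            · rw [h1, h2]; exact Sym2.eq_swap
    rw [hbij]
    exact hT.2.2.card_edgeFinset
  · -- E is the disjoint union of S and t(S)
    have huniv : (Finset.univ : Finset T.E) = S ∪ S.image t := by
      apply Finset.Subset.antisymm
      · intro f _
        by_cases hf : f ∈ S
        · exact Finset.mem_union_left _ hf
        · have htf : t f ∈ S := by
            by_contra htf
            exact hf ((hsec f).mpr htf)
          refine Finset.mem_union_right _ (Finset.mem_image.mpr ⟨t f, htf, (htw f).2.1⟩)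
      · exact Finset.subset_univ _
    have hdisj : Disjoint S (S.image t) := by
      rw [Finset.disjoint_left]
      intro f hf hf2
      obtain ⟨g, hg, rfl⟩ := Finset.mem_image.mp hf2
      exact (hsec g).mp hg hf
    rw [← Finset.card_univ, huniv, Finset.card_union_of_disjoint hdisj,
      Finset.card_image_of_injective S htinj, two_mul]

/-- If `f` does not share both endpoints with `e`, one of its endpoints avoids those of `e`. -/
lemma exists_free_vertex (T : TestGraph I) (hT : IsDoubleTree T) {e f : T.E}
    (h : ¬ SameEnds T e f) :
    ∃ w : T.V, (w = T.src f ∨ w = T.tar f) ∧ w ≠ T.src e ∧ w ≠ T.tar e := by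
  by_cases h1 : T.src f ≠ T.src e ∧ T.src f ≠ T.tar e
  · exact ⟨T.src f, Or.inl rfl, h1⟩
  · rw [not_and_or, not_ne_iff, not_ne_iff] at h1
    refine ⟨T.tar f, Or.inr rfl, ?_, ?_⟩
    · intro h2
      rcases h1 with h1 | h1
      · exact hT.1 f (h1.trans h2.symm)
      · exact h (Or.inr ⟨h1, h2⟩)
    · intro h2
      rcases h1 with h1 | h1
      · exact h (Or.inl ⟨h1, h2⟩)
      · exact hT.1 f (h1.trans h2.symm)

end Structure
section BadSet

open scoped Classical

variable {I : Type}

/-- The good injections: all entries off-diagonal, and independence classes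
coincide only within twin pairs with matching labels. -/
def GoodP (σ : I → (N : ℕ) → Equiv.Perm (Fin N × Fin N)) (T : TestGraph I)
    (t : T.E → T.E) {N : ℕ} (φ : T.V ↪ Fin N) : Prop :=
  (∀ e, (posE σ T φ e).1 ≠ (posE σ T φ e).2) ∧
  ∀ e f, clE σ T φ e = clE σ T φ f → f = e ∨ (f = t e ∧ T.lab f = T.lab e)

lemma Bpair_subset {N : ℕ} (σi σi' : Equiv.Perm (Fin N × Fin N)) (hsymm' : SymmPerm σi') :
    (Finset.univ.filter fun q : Fin N × Fin N =>
        repr2 (σi' (q.2, q.1)) = repr2 (σi q) ∨ repr2 (σi' q) = repr2 (σi q))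
      ⊆ FPset (σi'⁻¹ * σi) ∪ TPset (σi'⁻¹ * σi) := by
  intro q hq
  rw [Finset.mem_filter] at hq
  have happ : ∀ x, (σi'⁻¹ * σi) x = σi'⁻¹ (σi x) := fun x => rfl
  rcases hq.2 with h | h
  · rcases repr2_cases h with h2 | h2
    · -- σi q = σi' (q.2, q.1)
      refine Finset.mem_union_right _ ?_
      rw [TPset, Finset.mem_filter]
      refine ⟨Finset.mem_univ _, ?_⟩
      rw [happ, h2, Equiv.Perm.coe_inv, Equiv.symm_apply_apply]
    · -- σi q = swap (σi' (q.2,q.1)) = σi' q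
      refine Finset.mem_union_left _ ?_
      rw [FPset, Finset.mem_filter]
      refine ⟨Finset.mem_univ _, ?_⟩
      have h3 : σi' (q.2, q.1) = ((σi' q).2, (σi' q).1) := hsymm' q
      rw [happ, h2, h3]
      have : ((((σi' q).2, (σi' q).1) : Fin N × Fin N).2,
          ((((σi' q).2, (σi' q).1)) : Fin N × Fin N).1) = σi' q := rfl
      rw [this, Equiv.Perm.coe_inv, Equiv.symm_apply_apply]
  · rcases repr2_cases h with h2 | h2
    · refine Finset.mem_union_left _ ?_
      rw [FPset, Finset.mem_filter]
      refine ⟨Finset.mem_univ _, ?_⟩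
      rw [happ, h2, Equiv.Perm.coe_inv, Equiv.symm_apply_apply]
    · refine Finset.mem_union_right _ ?_
      rw [TPset, Finset.mem_filter]
      refine ⟨Finset.mem_univ _, ?_⟩
      have h3 : σi' (q.2, q.1) = ((σi' q).2, (σi' q).1) := hsymm' q
      rw [happ, h2, ← h3, Equiv.Perm.coe_inv, Equiv.symm_apply_apply]

/-- Bound for the diagonal bad event at an edge. -/
lemma baddiag_card_le (σ : I → (N : ℕ) → Equiv.Perm (Fin N × Fin N)) (T : TestGraph I)
    (hT : IsDoubleTree T) {N : ℕ} (e : T.E) :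
    ((Finset.univ : Finset (T.V ↪ Fin N)).filter fun φ =>
        (posE σ T φ e).1 = (posE σ T φ e).2).card
      ≤ N ^ (Fintype.card T.V - 1) := by
  have hn2 : 2 ≤ Fintype.card T.V := Fintype.one_lt_card_iff.mpr ⟨T.src e, T.tar e, hT.1 e⟩
  set i := T.lab e
  set Bdiag : Finset (Fin N × Fin N) :=
    Finset.univ.filter (fun q => (σ i N q).1 = (σ i N q).2) with hBdiag
  have hBcard : Bdiag.card ≤ N := by
    have := Finset.card_le_card_of_injOn (f := fun q => (σ i N q).1)
      (s := Bdiag) (t := Finset.univ) (fun q _ => Finset.mem_univ _) ?_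
    · simpa using this
    · intro q hq q' hq' heq
      rw [hBdiag, Finset.coe_filter] at hq hq'
      have hqq : σ i N q = σ i N q' := by
        refine Prod.ext heq ?_
        rw [← hq.2, ← hq'.2]; exact heq
      exact (σ i N).injective hqq
  have hfil : ((Finset.univ : Finset (T.V ↪ Fin N)).filter fun φ =>
      (posE σ T φ e).1 = (posE σ T φ e).2)
      = (Finset.univ : Finset (T.V ↪ Fin N)).filter fun φ =>
        (φ (T.tar e), φ (T.src e)) ∈ Bdiag := by
    refine Finset.filter_congr fun φ _ => ?_
    rw [hBdiag]
    simp only [Finset.mem_filter, Finset.mem_univ, true_and]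
    exact Iff.rfl
  rw [hfil]
  calc ((Finset.univ : Finset (T.V ↪ Fin N)).filter fun φ =>
        (φ (T.tar e), φ (T.src e)) ∈ Bdiag).card
      ≤ Bdiag.card * N ^ (Fintype.card T.V - 2) :=
        count_pair (T.tar e) (T.src e) (Ne.symm (hT.1 e)) Bdiag
    _ ≤ N * N ^ (Fintype.card T.V - 2) := Nat.mul_le_mul_right _ hBcard
    _ = N ^ (Fintype.card T.V - 1) := by
        rw [← pow_succ']
        congr 1
        omega

/-- Bound for the bad event of a twin pair with distinct labels. -/
lemma badtwin_card_le (σ : I → (N : ℕ) → Equiv.Perm (Fin N × Fin N))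
    (hsymm : ∀ i N, SymmPerm (σ i N)) (T : TestGraph I)
    (hT : IsDoubleTree T) (t : T.E → T.E) (htw : IsTwinInvolution T t) {N : ℕ} (e : T.E) :
    ((Finset.univ : Finset (T.V ↪ Fin N)).filter fun φ =>
        clE σ T φ e = clE σ T φ (t e)).card
      ≤ ((FPset ((σ (T.lab (t e)) N)⁻¹ * σ (T.lab e) N)).card
          + (TPset ((σ (T.lab (t e)) N)⁻¹ * σ (T.lab e) N)).card)
        * N ^ (Fintype.card T.V - 2) := by
  set i := T.lab e
  set i' := T.lab (t e)
  set Bp : Finset (Fin N × Fin N) := Finset.univ.filter fun q : Fin N × Fin N =>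
    repr2 (σ i' N (q.2, q.1)) = repr2 (σ i N q) ∨ repr2 (σ i' N q) = repr2 (σ i N q) with hBp
  have hsub : ((Finset.univ : Finset (T.V ↪ Fin N)).filter fun φ =>
      clE σ T φ e = clE σ T φ (t e))
      ⊆ (Finset.univ : Finset (T.V ↪ Fin N)).filter fun φ =>
        (φ (T.tar e), φ (T.src e)) ∈ Bp := by
    intro φ hφ
    rw [Finset.mem_filter] at hφ ⊢
    refine ⟨Finset.mem_univ _, ?_⟩
    have hval : repr2 (posE σ T φ e) = repr2 (posE σ T φ (t e)) :=
      congrArg Subtype.val hφ.2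
    rw [hBp, Finset.mem_filter]
    refine ⟨Finset.mem_univ _, ?_⟩
    rcases (htw e).2.2 with hc | ho
    · right
      have : posE σ T φ (t e) = σ i' N (φ (T.tar e), φ (T.src e)) := by
        unfold posE; rw [hc.1, hc.2]
      rw [this] at hval
      exact hval.symm
    · left
      have : posE σ T φ (t e)
          = σ i' N ((((φ (T.tar e), φ (T.src e)) : Fin N × Fin N)).2,
            (((φ (T.tar e), φ (T.src e)) : Fin N × Fin N)).1) := by
        unfold posE; rw [ho.1, ho.2]
      rw [this] at hval
      exact hval.symm
  calc ((Finset.univ : Finset (T.V ↪ Fin N)).filter fun φ =>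
        clE σ T φ e = clE σ T φ (t e)).card
      ≤ ((Finset.univ : Finset (T.V ↪ Fin N)).filter fun φ =>
        (φ (T.tar e), φ (T.src e)) ∈ Bp).card := Finset.card_le_card hsub
    _ ≤ Bp.card * N ^ (Fintype.card T.V - 2) :=
        count_pair (T.tar e) (T.src e) (Ne.symm (hT.1 e)) Bp
    _ ≤ ((FPset ((σ i' N)⁻¹ * σ i N)).card + (TPset ((σ i' N)⁻¹ * σ i N)).card)
          * N ^ (Fintype.card T.V - 2) := by
        refine Nat.mul_le_mul_right _ ?_
        calc Bp.card ≤ (FPset ((σ i' N)⁻¹ * σ i N) ∪ TPset ((σ i' N)⁻¹ * σ i N)).card :=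
              Finset.card_le_card (Bpair_subset (σ i N) (σ i' N) (hsymm i' N))
          _ ≤ _ := Finset.card_union_le _ _

/-- Bound for the bad event of two edges on distinct vertex pairs. -/
lemma badcross_card_le (σ : I → (N : ℕ) → Equiv.Perm (Fin N × Fin N)) (T : TestGraph I)
    (hT : IsDoubleTree T) {N : ℕ} {e f : T.E} (hse : ¬ SameEnds T e f) :
    ((Finset.univ : Finset (T.V ↪ Fin N)).filter fun φ =>
        clE σ T φ e = clE σ T φ f).card
      ≤ 4 * N ^ (Fintype.card T.V - 1) := by
  obtain ⟨w, hw, hw1, hw2⟩ := exists_free_vertex T hT hse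
  set j := T.lab f
  set K : (T.V ↪ Fin N) → Finset (Fin N) := fun φ =>
    {((σ j N)⁻¹ (posE σ T φ e)).1, ((σ j N)⁻¹ (posE σ T φ e)).2,
     ((σ j N)⁻¹ ((posE σ T φ e).2, (posE σ T φ e).1)).1,
     ((σ j N)⁻¹ ((posE σ T φ e).2, (posE σ T φ e).1)).2} with hK
  have hsub : ((Finset.univ : Finset (T.V ↪ Fin N)).filter fun φ =>
      clE σ T φ e = clE σ T φ f)
      ⊆ (Finset.univ : Finset (T.V ↪ Fin N)).filter fun φ => φ w ∈ K φ := by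
    intro φ hφ
    rw [Finset.mem_filter] at hφ ⊢
    refine ⟨Finset.mem_univ _, ?_⟩
    have hval : repr2 (posE σ T φ e) = repr2 (posE σ T φ f) :=
      congrArg Subtype.val hφ.2
    have hcases := repr2_cases hval
    have hpair : (φ (T.tar f), φ (T.src f)) = (σ j N)⁻¹ (posE σ T φ e)
        ∨ (φ (T.tar f), φ (T.src f)) = (σ j N)⁻¹ ((posE σ T φ e).2, (posE σ T φ e).1) := by
      rcases hcases with h2 | h2
      · left
        have : σ j N (φ (T.tar f), φ (T.src f)) = posE σ T φ e := h2
        rw [← this, Equiv.Perm.coe_inv, Equiv.symm_apply_apply]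
      · right
        have : σ j N (φ (T.tar f), φ (T.src f)) = ((posE σ T φ e).2, (posE σ T φ e).1) := h2
        rw [← this, Equiv.Perm.coe_inv, Equiv.symm_apply_apply]
    rw [hK]
    rcases hw with rfl | rfl
    · -- w = T.src f
      rcases hpair with h2 | h2
      · have : φ (T.src f) = ((σ j N)⁻¹ (posE σ T φ e)).2 := congrArg Prod.snd h2
        rw [this]; simp
      · have : φ (T.src f) = ((σ j N)⁻¹ ((posE σ T φ e).2, (posE σ T φ e).1)).2 :=
          congrArg Prod.snd h2
        rw [this]; simp
    · -- w = T.tar f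
      rcases hpair with h2 | h2
      · have : φ (T.tar f) = ((σ j N)⁻¹ (posE σ T φ e)).1 := congrArg Prod.fst h2
        rw [this]; simp
      · have : φ (T.tar f) = ((σ j N)⁻¹ ((posE σ T φ e).2, (posE σ T φ e).1)).1 :=
          congrArg Prod.fst h2
        rw [this]; simp
  calc ((Finset.univ : Finset (T.V ↪ Fin N)).filter fun φ =>
        clE σ T φ e = clE σ T φ f).card
      ≤ ((Finset.univ : Finset (T.V ↪ Fin N)).filter fun φ => φ w ∈ K φ).card :=
        Finset.card_le_card hsub
    _ ≤ 4 * N ^ (Fintype.card T.V - 1) := by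
        refine count_dep w 4 K ?_ ?_
        · intro φ
          rw [hK]
          calc ({((σ j N)⁻¹ (posE σ T φ e)).1, ((σ j N)⁻¹ (posE σ T φ e)).2,
              ((σ j N)⁻¹ ((posE σ T φ e).2, (posE σ T φ e).1)).1,
              ((σ j N)⁻¹ ((posE σ T φ e).2, (posE σ T φ e).1)).2} : Finset (Fin N)).card
              ≤ _ + 1 := Finset.card_insert_le _ _
            _ ≤ (_ + 1) + 1 := by
                exact Nat.add_le_add_right (Finset.card_insert_le _ _) 1
            _ ≤ ((_ + 1) + 1) + 1 := by
                exact Nat.add_le_add_right (Nat.add_le_add_right (Finset.card_insert_le _ _) 1) 1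
            _ ≤ 4 := by
                rw [Finset.card_singleton]
        · intro φ ψ hagree
          have hpos : posE σ T φ e = posE σ T ψ e := by
            unfold posE
            rw [hagree (T.tar e) (fun hh => hw2 hh.symm),
              hagree (T.src e) (fun hh => hw1 hh.symm)]
          simp only [hK, hpos]

end BadSet
section BadAgg

open scoped Classical

variable {I : Type}

lemma bad_card_le (σ : I → (N : ℕ) → Equiv.Perm (Fin N × Fin N))
    (hsymm : ∀ i N, SymmPerm (σ i N)) (T : TestGraph I) (hT : IsDoubleTree T)
    (t : T.E → T.E) (htw : IsTwinInvolution T t) (N : ℕ) :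
    ((Finset.univ : Finset (T.V ↪ Fin N)).filter fun φ => ¬ GoodP σ T t φ).card
      ≤ (Fintype.card T.E + 4 * (Fintype.card T.E * Fintype.card T.E))
          * N ^ (Fintype.card T.V - 1)
        + (∑ e : T.E, if T.lab (t e) = T.lab e then 0 else
            ((FPset ((σ (T.lab (t e)) N)⁻¹ * σ (T.lab e) N)).card
             + (TPset ((σ (T.lab (t e)) N)⁻¹ * σ (T.lab e) N)).card))
          * N ^ (Fintype.card T.V - 2) := by
  set n := Fintype.card T.V
  set A := (Finset.univ : Finset (T.V ↪ Fin N)).filter fun φ =>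
    ∃ e : T.E, (posE σ T φ e).1 = (posE σ T φ e).2 with hA
  set C := (Finset.univ : Finset (T.V ↪ Fin N)).filter fun φ =>
    ∃ p : T.E × T.E, clE σ T φ p.1 = clE σ T φ p.2
      ∧ ¬(p.2 = p.1 ∨ (p.2 = t p.1 ∧ T.lab p.2 = T.lab p.1)) with hC
  have hsubset : ((Finset.univ : Finset (T.V ↪ Fin N)).filter fun φ => ¬ GoodP σ T t φ)
      ⊆ A ∪ C := by
    intro φ hφ
    rw [Finset.mem_filter] at hφ
    rw [GoodP, not_and_or] at hφ
    rcases hφ.2 with h | h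
    · push_neg at h
      obtain ⟨e, he⟩ := h
      exact Finset.mem_union_left _ (Finset.mem_filter.mpr ⟨Finset.mem_univ _, ⟨e, he⟩⟩)
    · push_neg at h
      obtain ⟨e, f, hef, h1, h2⟩ := h
      refine Finset.mem_union_right _ (Finset.mem_filter.mpr ⟨Finset.mem_univ _, ⟨(e, f), hef, ?_⟩⟩)
      push_neg
      exact ⟨h1, h2⟩
  have hAcard : A.card ≤ Fintype.card T.E * N ^ (n - 1) := by
    have hsub2 : A ⊆ Finset.univ.biUnion fun e : T.E =>
        (Finset.univ : Finset (T.V ↪ Fin N)).filter fun φ =>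
          (posE σ T φ e).1 = (posE σ T φ e).2 := by
      intro φ hφ
      rw [hA, Finset.mem_filter] at hφ
      obtain ⟨e, he⟩ := hφ.2
      exact Finset.mem_biUnion.mpr ⟨e, Finset.mem_univ _,
        Finset.mem_filter.mpr ⟨Finset.mem_univ _, he⟩⟩
    calc A.card ≤ _ := Finset.card_le_card hsub2
      _ ≤ ∑ e : T.E, ((Finset.univ : Finset (T.V ↪ Fin N)).filter fun φ =>
          (posE σ T φ e).1 = (posE σ T φ e).2).card := Finset.card_biUnion_le
      _ ≤ ∑ _e : T.E, N ^ (n - 1) :=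
          Finset.sum_le_sum fun e _ => baddiag_card_le σ T hT e
      _ = Fintype.card T.E * N ^ (n - 1) := by
          rw [Finset.sum_const, Finset.card_univ, smul_eq_mul]
  have hCcard : C.card
      ≤ (∑ e : T.E, if T.lab (t e) = T.lab e then 0 else
          ((FPset ((σ (T.lab (t e)) N)⁻¹ * σ (T.lab e) N)).card
           + (TPset ((σ (T.lab (t e)) N)⁻¹ * σ (T.lab e) N)).card)) * N ^ (n - 2)
        + 4 * (Fintype.card T.E * Fintype.card T.E) * N ^ (n - 1) := by
    have hsub2 : C ⊆ Finset.univ.biUnion fun p : T.E × T.E =>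
        (Finset.univ : Finset (T.V ↪ Fin N)).filter fun φ =>
          clE σ T φ p.1 = clE σ T φ p.2
            ∧ ¬(p.2 = p.1 ∨ (p.2 = t p.1 ∧ T.lab p.2 = T.lab p.1)) := by
      intro φ hφ
      rw [hC, Finset.mem_filter] at hφ
      obtain ⟨p, hp⟩ := hφ.2
      exact Finset.mem_biUnion.mpr ⟨p, Finset.mem_univ _,
        Finset.mem_filter.mpr ⟨Finset.mem_univ _, hp⟩⟩
    have hper : ∀ p : T.E × T.E,
        ((Finset.univ : Finset (T.V ↪ Fin N)).filter fun φ =>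
          clE σ T φ p.1 = clE σ T φ p.2
            ∧ ¬(p.2 = p.1 ∨ (p.2 = t p.1 ∧ T.lab p.2 = T.lab p.1))).card
        ≤ (if p.2 = t p.1 then
            (if T.lab (t p.1) = T.lab p.1 then 0 else
              ((FPset ((σ (T.lab (t p.1)) N)⁻¹ * σ (T.lab p.1) N)).card
               + (TPset ((σ (T.lab (t p.1)) N)⁻¹ * σ (T.lab p.1) N)).card)) * N ^ (n - 2)
          else 0) + 4 * N ^ (n - 1) := by
      rintro ⟨e, f⟩
      by_cases hfe : f = e
      · have hempty : ((Finset.univ : Finset (T.V ↪ Fin N)).filter fun φ =>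
            clE σ T φ e = clE σ T φ f
              ∧ ¬(f = e ∨ (f = t e ∧ T.lab f = T.lab e))).card = 0 := by
          rw [Finset.card_eq_zero, Finset.filter_eq_empty_iff]
          intro φ _ hcon
          exact hcon.2 (Or.inl hfe)
        rw [hempty]
        positivity
      by_cases hfte : f = t e
      · subst hfte
        by_cases hlab : T.lab (t e) = T.lab e
        · have hempty : ((Finset.univ : Finset (T.V ↪ Fin N)).filter fun φ =>
              clE σ T φ e = clE σ T φ (t e)
                ∧ ¬(t e = e ∨ (t e = t e ∧ T.lab (t e) = T.lab e))).card = 0 := by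
            rw [Finset.card_eq_zero, Finset.filter_eq_empty_iff]
            intro φ _ hcon
            exact hcon.2 (Or.inr ⟨rfl, hlab⟩)
          rw [hempty]
          positivity
        · have hmono : ((Finset.univ : Finset (T.V ↪ Fin N)).filter fun φ =>
              clE σ T φ (e, t e).1 = clE σ T φ (e, t e).2
                ∧ ¬((e, t e).2 = (e, t e).1
                  ∨ ((e, t e).2 = t (e, t e).1 ∧ T.lab (e, t e).2 = T.lab (e, t e).1))).card
              ≤ ((Finset.univ : Finset (T.V ↪ Fin N)).filter fun φ =>
                clE σ T φ e = clE σ T φ (t e)).card := by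
            refine Finset.card_le_card fun φ hφ => ?_
            rw [Finset.mem_filter] at hφ ⊢
            exact ⟨hφ.1, hφ.2.1⟩
          refine le_trans hmono ?_
          rw [if_pos rfl, if_neg hlab]
          refine le_trans (badtwin_card_le σ hsymm T hT t htw e) (Nat.le_add_right _ _)
      · -- cross pair
        have hse : ¬ SameEnds T e f := by
          intro hse
          have : f ∈ ({e, t e} : Finset T.E) := by
            rw [← filter_sameEnds T hT t htw e]
            exact Finset.mem_filter.mpr ⟨Finset.mem_univ _, hse⟩
          rw [Finset.mem_insert, Finset.mem_singleton] at this
          rcases this with rfl | rfl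
          · exact hfe rfl
          · exact hfte rfl
        refine le_trans ?_ (Nat.le_add_left _ _)
        refine le_trans (Finset.card_le_card fun φ hφ => ?_)
          (badcross_card_le σ T hT hse)
        rw [Finset.mem_filter] at hφ ⊢
        exact ⟨hφ.1, hφ.2.1⟩
    calc C.card ≤ _ := Finset.card_le_card hsub2
      _ ≤ ∑ p : T.E × T.E, ((Finset.univ : Finset (T.V ↪ Fin N)).filter fun φ =>
            clE σ T φ p.1 = clE σ T φ p.2
              ∧ ¬(p.2 = p.1 ∨ (p.2 = t p.1 ∧ T.lab p.2 = T.lab p.1))).card :=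
          Finset.card_biUnion_le
      _ ≤ ∑ p : T.E × T.E, ((if p.2 = t p.1 then
            (if T.lab (t p.1) = T.lab p.1 then 0 else
              ((FPset ((σ (T.lab (t p.1)) N)⁻¹ * σ (T.lab p.1) N)).card
               + (TPset ((σ (T.lab (t p.1)) N)⁻¹ * σ (T.lab p.1) N)).card)) * N ^ (n - 2)
          else 0) + 4 * N ^ (n - 1)) := Finset.sum_le_sum fun p _ => hper p
      _ = (∑ p : T.E × T.E, (if p.2 = t p.1 then
            (if T.lab (t p.1) = T.lab p.1 then 0 else
              ((FPset ((σ (T.lab (t p.1)) N)⁻¹ * σ (T.lab p.1) N)).card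
               + (TPset ((σ (T.lab (t p.1)) N)⁻¹ * σ (T.lab p.1) N)).card)) * N ^ (n - 2)
          else 0)) + ∑ _p : T.E × T.E, 4 * N ^ (n - 1) := Finset.sum_add_distrib
      _ = (∑ e : T.E, if T.lab (t e) = T.lab e then 0 else
            ((FPset ((σ (T.lab (t e)) N)⁻¹ * σ (T.lab e) N)).card
             + (TPset ((σ (T.lab (t e)) N)⁻¹ * σ (T.lab e) N)).card)) * N ^ (n - 2)
          + 4 * (Fintype.card T.E * Fintype.card T.E) * N ^ (n - 1) := by
          congr 1
          · rw [Fintype.sum_prod_type, Finset.sum_mul]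
            refine Finset.sum_congr rfl fun x _ => ?_
            dsimp only
            rw [Finset.sum_ite_eq' Finset.univ (t x)]
            simp
          · rw [Finset.sum_const, Finset.card_univ, Fintype.card_prod, smul_eq_mul]
            ring
  calc ((Finset.univ : Finset (T.V ↪ Fin N)).filter fun φ => ¬ GoodP σ T t φ).card
      ≤ (A ∪ C).card := Finset.card_le_card hsubset
    _ ≤ A.card + C.card := Finset.card_union_le _ _
    _ ≤ Fintype.card T.E * N ^ (n - 1)
        + ((∑ e : T.E, if T.lab (t e) = T.lab e then 0 else
            ((FPset ((σ (T.lab (t e)) N)⁻¹ * σ (T.lab e) N)).card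
             + (TPset ((σ (T.lab (t e)) N)⁻¹ * σ (T.lab e) N)).card)) * N ^ (n - 2)
          + 4 * (Fintype.card T.E * Fintype.card T.E) * N ^ (n - 1)) :=
        Nat.add_le_add hAcard hCcard
    _ = _ := by ring

end BadAgg
open scoped Classical in
theorem statement11
    {Ω : Type} [MeasureSpace Ω] [IsProbabilityMeasure (volume : Measure Ω)] {I : Type}
    (β : ℝ) (hβ : β ∈ Set.Icc (-1 : ℝ) 1) (D : WignerData Ω (β : ℂ))
    (σ : I → (N : ℕ) → Equiv.Perm (Fin N × Fin N))
    (hsymm : ∀ (i : I) (N : ℕ), SymmPerm (σ i N))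
    (hvanish : ∀ i i' : I, i ≠ i' →
      Tendsto (fun N : ℕ =>
          (((FPset ((σ i' N)⁻¹ * σ i N)).card : ℝ) +
            ((TPset ((σ i' N)⁻¹ * σ i N)).card : ℝ)) / (N : ℝ) ^ 2) atTop (nhds 0)) :
    ∀ T : TestGraph I, IsDoubleTree T → ∀ (t : T.E → T.E) (S : Finset T.E),
      IsTwinInvolution T t → IsTwinSection T t S →
      Tendsto (fun N : ℕ => nu0 T (fun i ω => WmatPerm D N (σ i N) ω)) atTop
        (nhds (∏ e ∈ S,
            ((if (T.src (t e) = T.tar e ∧ T.tar (t e) = T.src e) ∧ T.lab (t e) = T.lab e then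
                (1 : ℂ)
              else 0) +
             (β : ℂ) *
              (if (T.src (t e) = T.src e ∧ T.tar (t e) = T.tar e) ∧ T.lab (t e) = T.lab e then
                (1 : ℂ)
              else 0)))) := by
  intro T hT t S htw hsec
  have hn1 : 1 ≤ Fintype.card T.V := Fintype.card_pos
  obtain ⟨hS1, hE2⟩ := card_S_eq T hT t S htw hsec
  set n := Fintype.card T.V with hn
  set L : ℂ := ∏ e ∈ S,
      ((if (T.src (t e) = T.tar e ∧ T.tar (t e) = T.src e) ∧ T.lab (t e) = T.lab e then
          (1 : ℂ) else 0) +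
       (β : ℂ) *
        (if (T.src (t e) = T.src e ∧ T.tar (t e) = T.tar e) ∧ T.lab (t e) = T.lab e then
          (1 : ℂ) else 0)) with hL
  have hLle : ‖L‖ ≤ 1 := by
    rw [hL, norm_prod]
    refine Finset.prod_le_one (fun e _ => norm_nonneg _) (fun e _ => ?_)
    by_cases hopp : (T.src (t e) = T.tar e ∧ T.tar (t e) = T.src e) ∧ T.lab (t e) = T.lab e
    · have hcong : ¬((T.src (t e) = T.src e ∧ T.tar (t e) = T.tar e) ∧ T.lab (t e) = T.lab e) := by
        rintro ⟨⟨h1, -⟩, -⟩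
        exact hT.1 e (h1.symm.trans hopp.1.1)
      rw [if_pos hopp, if_neg hcong]
      simp
    · rw [if_neg hopp]
      by_cases hcong : (T.src (t e) = T.src e ∧ T.tar (t e) = T.tar e) ∧ T.lab (t e) = T.lab e
      · rw [if_pos hcong, zero_add, mul_one, Complex.norm_real, Real.norm_eq_abs]
        exact abs_le.mpr ⟨hβ.1, hβ.2⟩
      · rw [if_neg hcong]
        simp
  have hsum : ∀ N : ℕ,
      (∑ φ : T.V ↪ Fin N, ∫ ω, ∏ e : T.E, D.X N (posE σ T φ e) ω)
      = (((Finset.univ : Finset (T.V ↪ Fin N)).filter fun φ => GoodP σ T t φ).card) • L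
        + ∑ φ ∈ (Finset.univ : Finset (T.V ↪ Fin N)).filter fun φ => ¬ GoodP σ T t φ,
            ∫ ω, ∏ e : T.E, D.X N (posE σ T φ e) ω := by
    intro N
    rw [← Finset.sum_filter_add_sum_filter_not Finset.univ (fun φ => GoodP σ T t φ)]
    congr 1
    rw [Finset.sum_congr rfl (fun φ hφ =>
      ((FF_of_good D σ hsymm T hT t S htw hsec φ ((Finset.mem_filter.mp hφ).2).1
        ((Finset.mem_filter.mp hφ).2).2).trans hL.symm)), Finset.sum_const]
  have hnu : ∀ N : ℕ, 1 ≤ N → nu0 T (fun i ω => WmatPerm D N (σ i N) ω)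
      = (∑ φ : T.V ↪ Fin N, ∫ ω, ∏ e : T.E, D.X N (posE σ T φ e) ω) * (((N:ℂ)) ^ n)⁻¹ := by
    intro N hN
    have hNC : (N:ℂ) ≠ 0 := by
      have hne : (N:ℕ) ≠ 0 := by omega
      exact_mod_cast Nat.cast_ne_zero.mpr hne
    have hpt : ∀ (φ : T.V ↪ Fin N) (ω : Ω),
        (∏ e : T.E, WmatPerm D N (σ (T.lab e) N) ω (φ (T.tar e)) (φ (T.src e)))
        = (∏ e : T.E, D.X N (posE σ T φ e) ω)
            / ((Real.sqrt N : ℝ) : ℂ) ^ (Fintype.card T.E) := by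
      intro φ ω
      have hterm : ∀ e : T.E, WmatPerm D N (σ (T.lab e) N) ω (φ (T.tar e)) (φ (T.src e))
          = D.X N (posE σ T φ e) ω / ((Real.sqrt N : ℝ) : ℂ) := fun e => rfl
      rw [Finset.prod_congr rfl (fun e _ => hterm e), Finset.prod_div_distrib,
        Finset.prod_const, Finset.card_univ]
    have hterm2 : ∀ φ : T.V ↪ Fin N,
        ∫ ω, ∏ e : T.E, WmatPerm D N (σ (T.lab e) N) ω (φ (T.tar e)) (φ (T.src e))
        = (∫ ω, ∏ e : T.E, D.X N (posE σ T φ e) ω)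
            / ((Real.sqrt N : ℝ) : ℂ) ^ (Fintype.card T.E) := by
      intro φ
      rw [integral_congr_ae (Filter.Eventually.of_forall (hpt φ)), integral_div]
    have hc : ((Real.sqrt N : ℝ) : ℂ) ^ (Fintype.card T.E) = (N : ℂ) ^ (n - 1) := by
      rw [hE2, pow_mul]
      have h2 : (((Real.sqrt N : ℝ)) : ℂ) ^ 2 = (N : ℂ) := by
        rw [← Complex.ofReal_pow, Real.sq_sqrt (by positivity : (0:ℝ) ≤ (N:ℝ))]
        simp
      rw [h2]
      congr 1
      omega
    simp only [nu0]
    have hsc : (∑ φ : T.V ↪ Fin N,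
        ∫ ω, ∏ e : T.E, WmatPerm D N (σ (T.lab e) N) ω (φ (T.tar e)) (φ (T.src e)))
        = (∑ φ : T.V ↪ Fin N, ∫ ω, ∏ e : T.E, D.X N (posE σ T φ e) ω)
            / ((Real.sqrt N : ℝ) : ℂ) ^ (Fintype.card T.E) := by
      rw [Finset.sum_congr rfl (fun φ _ => hterm2 φ), ← Finset.sum_div]
    rw [hsc, hc]
    have hpow : (N:ℂ)^n = (N:ℂ) * (N:ℂ)^(n-1) := by
      conv_lhs => rw [show n = 1 + (n-1) by omega]
      rw [pow_add, pow_one]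
    rw [hpow]
    have hNpow : (N:ℂ)^(n-1) ≠ 0 := pow_ne_zero _ hNC
    field_simp
  have hIN : ∀ N : ℕ, Fintype.card (T.V ↪ Fin N) = N.descFactorial n := by
    intro N
    rw [Fintype.card_embedding_eq, Fintype.card_fin]
  have hsplitcard : ∀ N : ℕ,
      (((Finset.univ : Finset (T.V ↪ Fin N)).filter fun φ => GoodP σ T t φ).card : ℝ)
        + (((Finset.univ : Finset (T.V ↪ Fin N)).filter fun φ => ¬ GoodP σ T t φ).card : ℝ)
      = (N.descFactorial n : ℝ) := by
    intro N
    have h := Finset.card_filter_add_card_filter_not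
      (s := (Finset.univ : Finset (T.V ↪ Fin N))) (p := fun φ => GoodP σ T t φ)
    rw [Finset.card_univ, hIN N] at h
    exact_mod_cast h
  have hBlim : Tendsto (fun N : ℕ =>
      ((((Finset.univ : Finset (T.V ↪ Fin N)).filter fun φ => ¬ GoodP σ T t φ).card : ℝ)
        / (N:ℝ)^n)) atTop (nhds 0) := by
    have hg : Tendsto (fun N : ℕ =>
        ((Fintype.card T.E + 4 * (Fintype.card T.E * Fintype.card T.E) : ℕ) : ℝ) / (N:ℝ)
        + ∑ e : T.E, (if T.lab (t e) = T.lab e then (0:ℝ) else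
            (((FPset ((σ (T.lab (t e)) N)⁻¹ * σ (T.lab e) N)).card : ℝ)
             + ((TPset ((σ (T.lab (t e)) N)⁻¹ * σ (T.lab e) N)).card : ℝ)) / (N:ℝ)^2))
        atTop (nhds 0) := by
      have h1 := tendsto_const_div_atTop_nhds_zero_nat
        ((Fintype.card T.E + 4 * (Fintype.card T.E * Fintype.card T.E) : ℕ) : ℝ)
      have h2 : Tendsto (fun N : ℕ =>
          ∑ e : T.E, (if T.lab (t e) = T.lab e then (0:ℝ) else
            (((FPset ((σ (T.lab (t e)) N)⁻¹ * σ (T.lab e) N)).card : ℝ)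
             + ((TPset ((σ (T.lab (t e)) N)⁻¹ * σ (T.lab e) N)).card : ℝ)) / (N:ℝ)^2))
          atTop (nhds (∑ _e : T.E, (0:ℝ))) := by
        refine tendsto_finset_sum _ fun e _ => ?_
        by_cases hlab : T.lab (t e) = T.lab e
        · simp only [if_pos hlab]
          exact tendsto_const_nhds
        · simp only [if_neg hlab]
          exact hvanish (T.lab e) (T.lab (t e)) (fun hh => hlab hh.symm)
      have h3 := h1.add h2
      simpa using h3
    refine squeeze_zero' (Filter.Eventually.of_forall fun N => by positivity) ?_ hg
    filter_upwards [Filter.eventually_ge_atTop 1] with N hN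
    have hNR : (1:ℝ) ≤ (N:ℝ) := by exact_mod_cast hN
    have hNpos : (0:ℝ) < (N:ℝ) := by linarith
    have hb := bad_card_le σ hsymm T hT t htw N
    have hbR : ((((Finset.univ : Finset (T.V ↪ Fin N)).filter
          fun φ => ¬ GoodP σ T t φ).card : ℝ))
        ≤ ((Fintype.card T.E + 4 * (Fintype.card T.E * Fintype.card T.E) : ℕ) : ℝ)
            * (N:ℝ)^(n-1)
          + (∑ e : T.E, (if T.lab (t e) = T.lab e then (0:ℝ) else
              (((FPset ((σ (T.lab (t e)) N)⁻¹ * σ (T.lab e) N)).card : ℝ)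
               + ((TPset ((σ (T.lab (t e)) N)⁻¹ * σ (T.lab e) N)).card : ℝ))))
            * (N:ℝ)^(n-2) := by
      exact_mod_cast hb
    refine le_trans ((div_le_div_iff_of_pos_right (by positivity)).mpr hbR) ?_
    rw [add_div]
    refine add_le_add (le_of_eq ?_) ?_
    · rw [div_eq_div_iff (by positivity) (by positivity)]
      have hpow : (N:ℝ)^n = (N:ℝ)^(n-1) * (N:ℝ) := by
        rw [← pow_succ]
        congr 1
        omega
      rw [hpow]
      ring
    · rw [Finset.sum_mul, Finset.sum_div]
      refine Finset.sum_le_sum fun e _ => ?_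
      by_cases hlab : T.lab (t e) = T.lab e
      · simp [hlab]
      · rw [if_neg hlab, if_neg hlab]
        have hn2 : 2 ≤ n := Fintype.one_lt_card_iff.mpr ⟨T.src e, T.tar e, hT.1 e⟩
        refine le_of_eq ?_
        rw [div_eq_div_iff (by positivity) (by positivity)]
        have hpow2 : (N:ℝ)^n = (N:ℝ)^(n-2) * (N:ℝ)^2 := by
          rw [← pow_add]
          congr 1
          omega
        rw [hpow2]
        ring
  have hGlim : Tendsto (fun N : ℕ =>
      ((((Finset.univ : Finset (T.V ↪ Fin N)).filter fun φ => GoodP σ T t φ).card : ℝ)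
        / (N:ℝ)^n)) atTop (nhds 1) := by
    have heq : ∀ N : ℕ,
        ((((Finset.univ : Finset (T.V ↪ Fin N)).filter fun φ => GoodP σ T t φ).card : ℝ)
          / (N:ℝ)^n)
        = (N.descFactorial n : ℝ)/(N:ℝ)^n
          - (((Finset.univ : Finset (T.V ↪ Fin N)).filter
              fun φ => ¬ GoodP σ T t φ).card : ℝ)/(N:ℝ)^n := by
      intro N
      rw [← sub_div]
      congr 1
      have h := hsplitcard N
      linarith
    have h4 := (tendsto_descFactorial_div n).sub hBlim
    rw [sub_zero] at h4
    exact h4.congr (fun N => (heq N).symm)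
  -- final assembly
  rw [tendsto_iff_norm_sub_tendsto_zero]
  have htend : Tendsto (fun N : ℕ =>
      |(((Finset.univ : Finset (T.V ↪ Fin N)).filter fun φ => GoodP σ T t φ).card : ℝ)
          / (N:ℝ)^n - 1|
        + ((((Finset.univ : Finset (T.V ↪ Fin N)).filter
            fun φ => ¬ GoodP σ T t φ).card : ℝ) / (N:ℝ)^n) * Cb D T)
      atTop (nhds 0) := by
    have h5 : Tendsto (fun N : ℕ =>
        |(((Finset.univ : Finset (T.V ↪ Fin N)).filter fun φ => GoodP σ T t φ).card : ℝ)
          / (N:ℝ)^n - 1|) atTop (nhds 0) := by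
      have := (hGlim.sub (tendsto_const_nhds : Tendsto (fun _ : ℕ => (1:ℝ)) atTop (nhds 1))).abs
      simpa using this
    have h6 := hBlim.mul_const (Cb D T)
    rw [zero_mul] at h6
    have h7 := h5.add h6
    rw [add_zero] at h7
    exact h7
  refine squeeze_zero' (Filter.Eventually.of_forall fun N => norm_nonneg _) ?_ htend
  filter_upwards [Filter.eventually_ge_atTop 1] with N hN
  have hNR : (1:ℝ) ≤ (N:ℝ) := by exact_mod_cast hN
  have hNpos : (0:ℝ) < (N:ℝ) := by linarith
  rw [hnu N hN, hsum N]
  set g : ℕ := ((Finset.univ : Finset (T.V ↪ Fin N)).filter fun φ => GoodP σ T t φ).card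
    with hgdef
  set BadS : Finset (T.V ↪ Fin N) :=
    (Finset.univ : Finset (T.V ↪ Fin N)).filter fun φ => ¬ GoodP σ T t φ with hBadS
  set BB : ℂ := ∑ φ ∈ BadS, ∫ ω, ∏ e : T.E, D.X N (posE σ T φ e) ω with hBB
  have hexp : (g • L + BB) * ((N:ℂ)^n)⁻¹ - L
      = ((g:ℂ) * ((N:ℂ)^n)⁻¹ - 1) * L + BB * ((N:ℂ)^n)⁻¹ := by
    rw [nsmul_eq_mul]
    ring
  rw [hexp]
  have hBBnorm : ‖BB‖ ≤ (BadS.card : ℝ) * Cb D T := by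
    rw [hBB]
    calc ‖∑ φ ∈ BadS, ∫ ω, ∏ e : T.E, D.X N (posE σ T φ e) ω‖
        ≤ ∑ φ ∈ BadS, ‖∫ ω, ∏ e : T.E, D.X N (posE σ T φ e) ω‖ := norm_sum_le _ _
      _ ≤ ∑ _φ ∈ BadS, Cb D T := Finset.sum_le_sum fun φ _ => FF_norm_le D σ T φ
      _ = (BadS.card : ℝ) * Cb D T := by rw [Finset.sum_const, nsmul_eq_mul]
  have hgnorm : ‖((g:ℂ) * ((N:ℂ)^n)⁻¹ - 1)‖ = |((g:ℝ)/(N:ℝ)^n - 1)| := by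
    have hcast : ((g:ℂ) * ((N:ℂ)^n)⁻¹ - 1) = (((g:ℝ)/(N:ℝ)^n - 1 : ℝ) : ℂ) := by
      push_cast
      ring
    rw [hcast, Complex.norm_real, Real.norm_eq_abs]
  have hinvnorm : ‖((N:ℂ)^n)⁻¹‖ = ((N:ℝ)^n)⁻¹ := by
    rw [norm_inv, norm_pow, Complex.norm_natCast]
  calc ‖((g:ℂ) * ((N:ℂ)^n)⁻¹ - 1) * L + BB * ((N:ℂ)^n)⁻¹‖
      ≤ ‖((g:ℂ) * ((N:ℂ)^n)⁻¹ - 1) * L‖ + ‖BB * ((N:ℂ)^n)⁻¹‖ := norm_add_le _ _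
    _ = ‖((g:ℂ) * ((N:ℂ)^n)⁻¹ - 1)‖ * ‖L‖ + ‖BB‖ * ‖((N:ℂ)^n)⁻¹‖ := by
        rw [norm_mul, norm_mul]
    _ ≤ ‖((g:ℂ) * ((N:ℂ)^n)⁻¹ - 1)‖ * 1
        + ((BadS.card : ℝ) * Cb D T) * ‖((N:ℂ)^n)⁻¹‖ := by
        refine add_le_add (mul_le_mul_of_nonneg_left hLle (norm_nonneg _))
          (mul_le_mul_of_nonneg_right hBBnorm (norm_nonneg _))
    _ = |((g:ℝ)/(N:ℝ)^n - 1)| + ((BadS.card : ℝ)/(N:ℝ)^n) * Cb D T := by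
        rw [hgnorm, hinvnorm, mul_one]
        ring

end PermutedWigner
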